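/- arXiv:1902.04429 — 9 statements merged into one kernel-verified Lean document; each statement's English description precedes it below -/
import Mathlib

section
/- The numerical wavenumber of the tenth-order compact scheme C10 (α₁ = 1/2, α₂ = 1/20, a₁ = 17/24, a₂ = 101/600, a₃ = 1/600), K(z) = ((17/12)·sin z + (101/300)·sin 2z + (1/300)·sin 3z) / (1 + cos z + (1/10)·cos 2z), satisfies K(z) − z = O(z¹¹) as z → 0. -/
open Filter Asymptotics Topology

noncomputable def Rrem (k : ℝ) (n : ℕ) (z : ℝ) : ℂ :=
  Complex.exp (k*(z*Complex.I)) - ∑ j ∈ Finset.range n, (k*(z*Complex.I))^j / j.factorial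

lemma Rrem_bound (k : ℝ) (n : ℕ) (hn : 0 < n) (z : ℝ) (h : |k| * |z| ≤ 1) :
    ‖Rrem k n z‖ ≤ (|k| * |z|)^n * (n+1) := by
  have hx : ‖(↑k*(↑z*Complex.I) : ℂ)‖ = |k| * |z| := by
    simp [Complex.norm_real]
  have := Complex.exp_bound (x := ↑k*(↑z*Complex.I)) (by rw [hx]; exact h) hn
  rw [hx] at this
  refine this.trans ?_
  have h1 : ((n.succ : ℝ) * ((n.factorial : ℝ) * n)⁻¹) ≤ (n+1 : ℝ) := by
    have h2 : (1:ℝ) ≤ (n.factorial : ℝ) * n := by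
      have ha : (1:ℝ) ≤ (n.factorial:ℝ) := by exact_mod_cast n.factorial_pos
      nlinarith [show (1:ℝ) ≤ (n:ℝ) from by exact_mod_cast hn]
    have h3 : ((n.factorial : ℝ) * n)⁻¹ ≤ 1 := by
      rw [inv_le_one_iff₀]; right; exact h2
    have h4 : (0:ℝ) ≤ ((n.factorial : ℝ) * n)⁻¹ := by positivity
    have h5 : (n.succ : ℝ) = (n:ℝ)+1 := by push_cast; ring
    rw [h5]
    nlinarith [show (0:ℝ) < (n:ℝ)+1 from by positivity]
  have hnn : (0:ℝ) ≤ (|k| * |z|)^n := by positivity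
  calc (|k| * |z|)^n * ((n.succ : ℝ) * ((n.factorial : ℝ) * n)⁻¹) ≤ (|k| * |z|)^n * (n+1) := by
        exact mul_le_mul_of_nonneg_left (by exact_mod_cast h1) hnn

lemma key_id (z : ℝ) :
    Complex.I * (((17/12) * Real.sin z + (101/300) * Real.sin (2*z) + (1/300) * Real.sin (3*z)
        - z * (1 + Real.cos z + (1/10) * Real.cos (2*z)) : ℝ) : ℂ) =
    (17/24)*(Rrem 1 11 z - Rrem (-1) 11 z) + (101/600)*(Rrem 2 11 z - Rrem (-2) 11 z)
      + (1/600)*(Rrem 3 11 z - Rrem (-3) 11 z)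
      - (↑z*Complex.I)*((1/2)*(Rrem 1 10 z + Rrem (-1) 10 z) + (1/20)*(Rrem 2 10 z + Rrem (-2) 10 z)) := by
  simp only [Rrem, Finset.sum_range_succ, Finset.sum_range_zero]
  push_cast
  simp only [Complex.sin, Complex.cos, Nat.factorial]
  push_cast
  ring_nf
  simp only [Complex.I_sq]
  ring_nf

lemma num_bound (z : ℝ) (hz : |z| ≤ 1/3) :
    |(17/12) * Real.sin z + (101/300) * Real.sin (2*z) + (1/300) * Real.sin (3*z)
        - z * (1 + Real.cos z + (1/10) * Real.cos (2*z))| ≤ 20000 * |z|^11 := by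
  have hz0 : (0:ℝ) ≤ |z| := abs_nonneg z
  have b1 : ‖Rrem 1 11 z‖ ≤ |z|^11 * 12 := by
    refine (Rrem_bound 1 11 (by norm_num) z (by rw [abs_one, one_mul]; linarith)).trans ?_
    rw [abs_one, one_mul]; norm_num
  have b1' : ‖Rrem (-1) 11 z‖ ≤ |z|^11 * 12 := by
    refine (Rrem_bound (-1) 11 (by norm_num) z (by rw [abs_neg, abs_one, one_mul]; linarith)).trans ?_
    rw [abs_neg, abs_one, one_mul]; norm_num
  have b2 : ‖Rrem 2 11 z‖ ≤ 2^11 * |z|^11 * 12 := by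
    refine (Rrem_bound 2 11 (by norm_num) z (by rw [abs_two]; linarith)).trans ?_
    rw [abs_two, mul_pow]; norm_num
  have b2' : ‖Rrem (-2) 11 z‖ ≤ 2^11 * |z|^11 * 12 := by
    refine (Rrem_bound (-2) 11 (by norm_num) z (by rw [show |(-2:ℝ)| = 2 by norm_num]; linarith)).trans ?_
    rw [show |(-2:ℝ)| = 2 by norm_num, mul_pow]; norm_num
  have b3 : ‖Rrem 3 11 z‖ ≤ 3^11 * |z|^11 * 12 := by
    refine (Rrem_bound 3 11 (by norm_num) z (by rw [show |(3:ℝ)| = 3 by norm_num]; linarith)).trans ?_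
    rw [show |(3:ℝ)| = 3 by norm_num, mul_pow]; norm_num
  have b3' : ‖Rrem (-3) 11 z‖ ≤ 3^11 * |z|^11 * 12 := by
    refine (Rrem_bound (-3) 11 (by norm_num) z (by rw [show |(-3:ℝ)| = 3 by norm_num]; linarith)).trans ?_
    rw [show |(-3:ℝ)| = 3 by norm_num, mul_pow]; norm_num
  have c1 : ‖Rrem 1 10 z‖ ≤ |z|^10 * 11 := by
    refine (Rrem_bound 1 10 (by norm_num) z (by rw [abs_one, one_mul]; linarith)).trans ?_
    rw [abs_one, one_mul]; norm_num
  have c1' : ‖Rrem (-1) 10 z‖ ≤ |z|^10 * 11 := by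
    refine (Rrem_bound (-1) 10 (by norm_num) z (by rw [abs_neg, abs_one, one_mul]; linarith)).trans ?_
    rw [abs_neg, abs_one, one_mul]; norm_num
  have c2 : ‖Rrem 2 10 z‖ ≤ 2^10 * |z|^10 * 11 := by
    refine (Rrem_bound 2 10 (by norm_num) z (by rw [abs_two]; linarith)).trans ?_
    rw [abs_two, mul_pow]; norm_num
  have c2' : ‖Rrem (-2) 10 z‖ ≤ 2^10 * |z|^10 * 11 := by
    refine (Rrem_bound (-2) 10 (by norm_num) z (by rw [show |(-2:ℝ)| = 2 by norm_num]; linarith)).trans ?_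
    rw [show |(-2:ℝ)| = 2 by norm_num, mul_pow]; norm_num
  have habs := congrArg (‖·‖) (key_id z)
  rw [norm_mul, Complex.norm_I, one_mul, Complex.norm_real, Real.norm_eq_abs] at habs
  rw [habs]
  set A := (17/24 : ℂ)*(Rrem 1 11 z - Rrem (-1) 11 z) with hA
  set B := (101/600 : ℂ)*(Rrem 2 11 z - Rrem (-2) 11 z) with hB
  set C := (1/600 : ℂ)*(Rrem 3 11 z - Rrem (-3) 11 z) with hC
  set D := (↑z*Complex.I)*((1/2)*(Rrem 1 10 z + Rrem (-1) 10 z) + (1/20)*(Rrem 2 10 z + Rrem (-2) 10 z)) with hD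
  have t1 : ‖A + B + C - D‖ ≤ ‖A‖ + ‖B‖ + ‖C‖ + ‖D‖ := by
    calc ‖A + B + C - D‖ ≤ ‖A + B + C‖ + ‖D‖ := norm_sub_le _ _
      _ ≤ (‖A‖ + ‖B‖ + ‖C‖) + ‖D‖ := by gcongr; exact norm_add₃_le
  have nA : ‖A‖ ≤ (17/24) * (‖Rrem 1 11 z‖ + ‖Rrem (-1) 11 z‖) := by
    rw [hA, norm_mul]
    have : ‖(17/24 : ℂ)‖ = 17/24 := by norm_num
    rw [this]
    exact mul_le_mul_of_nonneg_left (norm_sub_le _ _) (by norm_num)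
  have nB : ‖B‖ ≤ (101/600) * (‖Rrem 2 11 z‖ + ‖Rrem (-2) 11 z‖) := by
    rw [hB, norm_mul]
    have : ‖(101/600 : ℂ)‖ = 101/600 := by norm_num
    rw [this]
    exact mul_le_mul_of_nonneg_left (norm_sub_le _ _) (by norm_num)
  have nC : ‖C‖ ≤ (1/600) * (‖Rrem 3 11 z‖ + ‖Rrem (-3) 11 z‖) := by
    rw [hC, norm_mul]
    have : ‖(1/600 : ℂ)‖ = 1/600 := by norm_num
    rw [this]
    exact mul_le_mul_of_nonneg_left (norm_sub_le _ _) (by norm_num)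
  have nD : ‖D‖ ≤ |z| * ((1/2) * (‖Rrem 1 10 z‖ + ‖Rrem (-1) 10 z‖) + (1/20) * (‖Rrem 2 10 z‖ + ‖Rrem (-2) 10 z‖)) := by
    rw [hD, norm_mul]
    have hzI : ‖(z:ℂ)*Complex.I‖ = |z| := by rw [norm_mul]; simp
    rw [hzI]
    refine mul_le_mul_of_nonneg_left ?_ hz0
    refine (norm_add_le _ _).trans ?_
    gcongr
    · rw [norm_mul]
      have : ‖(1/2 : ℂ)‖ = 1/2 := by norm_num
      rw [this]
      exact mul_le_mul_of_nonneg_left (norm_add_le _ _) (by norm_num)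
    · rw [norm_mul]
      have : ‖(1/20 : ℂ)‖ = 1/20 := by norm_num
      rw [this]
      exact mul_le_mul_of_nonneg_left (norm_add_le _ _) (by norm_num)
  have hD2 : ‖D‖ ≤ |z| * (|z|^10 * 11 + (1/20) * (2 * (2^10 * |z|^10 * 11))) := by
    refine nD.trans ?_
    refine mul_le_mul_of_nonneg_left ?_ hz0
    nlinarith [norm_nonneg (Rrem 1 10 z), norm_nonneg (Rrem (-1) 10 z)]
  have hD3 : ‖D‖ ≤ 11 * |z|^11 + (2^10 * 11 / 10) * |z|^11 := by
    refine hD2.trans ?_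
    nlinarith [pow_nonneg hz0 10, pow_nonneg hz0 11]
  calc ‖A + B + C - D‖ ≤ ‖A‖ + ‖B‖ + ‖C‖ + ‖D‖ := t1
    _ ≤ 20000 * |z|^11 := by nlinarith [pow_nonneg hz0 11]

/-- The numerical wavenumber of the C10 compact scheme agrees with the exact
wavenumber `z` up to `O(z^11)` as `z → 0`. -/
theorem c10_wavenumber (K : ℝ → ℝ)
    (hK : ∀ z : ℝ, K z = ((17/12) * Real.sin z + (101/300) * Real.sin (2*z) + (1/300) * Real.sin (3*z)) / (1 + Real.cos z + (1/10) * Real.cos (2*z))) :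
    (fun z : ℝ => K z - z) =O[𝓝 (0 : ℝ)] fun z : ℝ => z ^ 11 := by
  rw [isBigO_iff]
  refine ⟨20000, ?_⟩
  have hden : ∀ᶠ z : ℝ in 𝓝 0, 1 ≤ 1 + Real.cos z + (1/10) * Real.cos (2*z) := by
    have hc : ContinuousAt (fun z : ℝ => 1 + Real.cos z + (1/10) * Real.cos (2*z)) 0 := by
      fun_prop
    have h0 : (fun z : ℝ => 1 + Real.cos z + (1/10) * Real.cos (2*z)) 0 = 21/10 := by
      norm_num
    have := hc.eventually_mem (s := Set.Ioi (1:ℝ)) (by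
      norm_num; exact Ioi_mem_nhds (by norm_num))
    filter_upwards [this] with z hz using le_of_lt hz
  have hball : ∀ᶠ z : ℝ in 𝓝 0, |z| ≤ 1/3 := by
    have := Metric.ball_mem_nhds (0:ℝ) (by norm_num : (0:ℝ) < 1/3)
    filter_upwards [this] with z hz
    rw [Metric.mem_ball, Real.dist_eq, sub_zero] at hz
    linarith
  filter_upwards [hden, hball] with z h1 h3
  have hdpos : (0:ℝ) < 1 + Real.cos z + (1/10) * Real.cos (2*z) := by linarith
  have hrw : K z - z = ((17/12) * Real.sin z + (101/300) * Real.sin (2*z) + (1/300) * Real.sin (3*z)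
      - z * (1 + Real.cos z + (1/10) * Real.cos (2*z))) / (1 + Real.cos z + (1/10) * Real.cos (2*z)) := by
    rw [hK z, eq_div_iff (ne_of_gt hdpos), sub_mul, div_mul_cancel₀ _ (ne_of_gt hdpos)]
  rw [hrw]
  rw [Real.norm_eq_abs, Real.norm_eq_abs, abs_div]
  have h2 := num_bound z h3
  have hdenabs : |1 + Real.cos z + (1/10) * Real.cos (2*z)| = 1 + Real.cos z + (1/10) * Real.cos (2*z) :=
    abs_of_pos hdpos
  rw [hdenabs, abs_pow]
  calc |(17/12) * Real.sin z + (101/300) * Real.sin (2*z) + (1/300) * Real.sin (3*z)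
      - z * (1 + Real.cos z + (1/10) * Real.cos (2*z))| / (1 + Real.cos z + (1/10) * Real.cos (2*z))
      ≤ |(17/12) * Real.sin z + (101/300) * Real.sin (2*z) + (1/300) * Real.sin (3*z)
      - z * (1 + Real.cos z + (1/10) * Real.cos (2*z))| := div_le_self (abs_nonneg _) h1
    _ ≤ 20000 * |z|^11 := h2
end

section
/- The numerical wavenumber of the twelfth-order compact scheme C12 (α₁ = 9/16, α₂ = 9/100, α₃ = 1/400, a₁ = 21/32, a₂ = 231/1000, a₃ = 49/4000), K(z) = ((21/16)·sin z + (231/500)·sin 2z + (49/2000)·sin 3z) / (1 + (9/8)·cos z + (9/50)·cos 2z + (1/200)·cos 3z), satisfies K(z) − z = O(z¹³) as z → 0. -/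
open Filter Asymptotics Topology

noncomputable def T13 (t : ℝ) : ℂ :=
  ∑ i ∈ Finset.range 13, ((t : ℂ) * Complex.I) ^ i / (Nat.factorial i)

noncomputable def Ssin (t : ℝ) : ℝ :=
  t - t^3/6 + t^5/120 - t^7/5040 + t^9/362880 - t^11/39916800

noncomputable def Scos (t : ℝ) : ℝ :=
  1 - t^2/2 + t^4/24 - t^6/720 + t^8/40320 - t^10/3628800 + t^12/479001600

lemma T13_im (t : ℝ) : (T13 t).im = Ssin t := by
  simp [T13, Ssin, Finset.sum_range_succ, mul_pow, pow_succ, Nat.factorial]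
  ring

lemma T13_re (t : ℝ) : (T13 t).re = Scos t := by
  simp [T13, Scos, Finset.sum_range_succ, mul_pow, pow_succ, Nat.factorial]
  ring

lemma exp_taylor (k : ℝ) (hk : |k| ≤ 3) :
    (fun z : ℝ => Complex.exp (↑(k*z) * Complex.I) - T13 (k*z)) =O[𝓝 (0:ℝ)]
      fun z : ℝ => z ^ 13 := by
  rw [Asymptotics.isBigO_iff]
  refine ⟨3^13 * ((14 : ℝ) * ((Nat.factorial 13 : ℝ) * 13)⁻¹), ?_⟩
  filter_upwards [Metric.ball_mem_nhds (0:ℝ) (by norm_num : (0:ℝ) < 1/3)] with z hz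
  rw [Metric.mem_ball, Real.dist_eq, sub_zero] at hz
  have hkz : |k * z| ≤ 3 * |z| := by
    rw [abs_mul]
    have := abs_nonneg z
    nlinarith
  have hx : ‖(↑(k*z) * Complex.I : ℂ)‖ ≤ 1 := by
    rw [norm_mul, Complex.norm_I, Complex.norm_real, Real.norm_eq_abs, mul_one]
    nlinarith
  have hb := Complex.exp_bound hx (by norm_num : 0 < 13)
  have habs : ‖(↑(k*z) * Complex.I : ℂ)‖ = |k * z| := by
    rw [norm_mul, Complex.norm_I, Complex.norm_real, Real.norm_eq_abs, mul_one]
  rw [T13]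
  calc ‖(Complex.exp (↑(k*z) * Complex.I)
        - ∑ i ∈ Finset.range 13, (↑(k*z) * Complex.I) ^ i / (Nat.factorial i) : ℂ)‖
      ≤ ‖(↑(k*z) * Complex.I : ℂ)‖ ^ 13
        * ((14 : ℝ) * ((Nat.factorial 13 : ℝ) * 13)⁻¹) := by
        simpa using hb
    _ ≤ (3 * |z|) ^ 13 * ((14 : ℝ) * ((Nat.factorial 13 : ℝ) * 13)⁻¹) := by
        refine mul_le_mul_of_nonneg_right
          (pow_le_pow_left₀ (norm_nonneg _) ?_ 13) (by positivity)
        rw [habs]; exact hkz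
    _ = 3^13 * ((14 : ℝ) * ((Nat.factorial 13 : ℝ) * 13)⁻¹) * ‖z ^ 13‖ := by
        rw [norm_pow, Real.norm_eq_abs]; ring

lemma sin_taylor (k : ℝ) (hk : |k| ≤ 3) :
    (fun z : ℝ => Real.sin (k*z) - Ssin (k*z)) =O[𝓝 (0:ℝ)] fun z : ℝ => z ^ 13 := by
  refine IsBigO.trans (Asymptotics.isBigO_of_le _ fun z => ?_) (exp_taylor k hk)
  rw [Real.norm_eq_abs, ← Complex.exp_ofReal_mul_I_im (k*z), ← T13_im (k*z),
    ← Complex.sub_im]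
  exact Complex.abs_im_le_norm _

lemma cos_taylor (k : ℝ) (hk : |k| ≤ 3) :
    (fun z : ℝ => Real.cos (k*z) - Scos (k*z)) =O[𝓝 (0:ℝ)] fun z : ℝ => z ^ 13 := by
  refine IsBigO.trans (Asymptotics.isBigO_of_le _ fun z => ?_) (exp_taylor k hk)
  rw [Real.norm_eq_abs, ← Complex.exp_ofReal_mul_I_re (k*z), ← T13_re (k*z),
    ← Complex.sub_re]
  exact Complex.abs_re_le_norm _

/-- The numerical wavenumber of the C12 compact scheme agrees with the exact
wavenumber `z` up to `O(z^13)` as `z → 0`. -/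
theorem c12_wavenumber (K : ℝ → ℝ)
    (hK : ∀ z : ℝ, K z = ((21/16) * Real.sin z + (231/500) * Real.sin (2*z) + (49/2000) * Real.sin (3*z)) / (1 + (9/8) * Real.cos z + (9/50) * Real.cos (2*z) + (1/200) * Real.cos (3*z))) :
    (fun z : ℝ => K z - z) =O[𝓝 (0 : ℝ)] fun z : ℝ => z ^ 13 := by
  set D : ℝ → ℝ := fun z =>
    1 + (9/8) * Real.cos z + (9/50) * Real.cos (2*z) + (1/200) * Real.cos (3*z) with hD
  set N : ℝ → ℝ := fun z =>
    (21/16) * Real.sin z + (231/500) * Real.sin (2*z) + (49/2000) * Real.sin (3*z) with hN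
  -- the numerator of K z - z is O(z^13)
  have key : ∀ z : ℝ, N z - z * D z =
      ((21/16) * (Real.sin (1*z) - Ssin (1*z))
        + (231/500) * (Real.sin (2*z) - Ssin (2*z))
        + (49/2000) * (Real.sin (3*z) - Ssin (3*z)))
      - z * ((9/8) * (Real.cos (1*z) - Scos (1*z))
        + (9/50) * (Real.cos (2*z) - Scos (2*z))
        + (1/200) * (Real.cos (3*z) - Scos (3*z)))
      + (-37729/5322240000 : ℝ) * z ^ 13 := by
    intro z
    simp only [hN, hD, Ssin, Scos, one_mul]
    ring
  have s1 := sin_taylor 1 (by norm_num)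
  have s2 := sin_taylor 2 (by norm_num)
  have s3 := sin_taylor 3 (by norm_num)
  have c1 := cos_taylor 1 (by norm_num)
  have c2 := cos_taylor 2 (by norm_num)
  have c3 := cos_taylor 3 (by norm_num)
  have hz1 : (fun z : ℝ => z) =O[𝓝 (0:ℝ)] (fun _ : ℝ => (1:ℝ)) :=
    (continuous_id.tendsto (0:ℝ)).isBigO_one ℝ
  have hsin : (fun z : ℝ => (21/16) * (Real.sin (1*z) - Ssin (1*z))
      + (231/500) * (Real.sin (2*z) - Ssin (2*z))
      + (49/2000) * (Real.sin (3*z) - Ssin (3*z))) =O[𝓝 (0:ℝ)] fun z => z ^ 13 :=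
    ((s1.const_mul_left _).add (s2.const_mul_left _)).add (s3.const_mul_left _)
  have hcos : (fun z : ℝ => (9/8) * (Real.cos (1*z) - Scos (1*z))
      + (9/50) * (Real.cos (2*z) - Scos (2*z))
      + (1/200) * (Real.cos (3*z) - Scos (3*z))) =O[𝓝 (0:ℝ)] fun z => z ^ 13 :=
    ((c1.const_mul_left _).add (c2.const_mul_left _)).add (c3.const_mul_left _)
  have hzcos : (fun z : ℝ => z * ((9/8) * (Real.cos (1*z) - Scos (1*z))
      + (9/50) * (Real.cos (2*z) - Scos (2*z))
      + (1/200) * (Real.cos (3*z) - Scos (3*z)))) =O[𝓝 (0:ℝ)] fun z => z ^ 13 := by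
    have := hz1.mul hcos
    simpa using this
  have hlast : (fun z : ℝ => (-37729/5322240000 : ℝ) * z ^ 13) =O[𝓝 (0:ℝ)]
      fun z => z ^ 13 := (isBigO_refl _ _).const_mul_left _
  have hg : (fun z : ℝ => N z - z * D z) =O[𝓝 (0:ℝ)] fun z => z ^ 13 :=
    (((hsin.sub hzcos).add hlast).congr_left fun z => (key z).symm)
  -- the denominator is bounded away from 0 near 0
  have hDc : ContinuousAt D 0 := by
    apply ContinuousAt.add
    apply ContinuousAt.add
    apply ContinuousAt.add
    · exact continuousAt_const
    · exact continuousAt_const.mul (Real.continuous_cos.continuousAt)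
    · exact continuousAt_const.mul
        ((Real.continuous_cos.comp (continuous_const.mul continuous_id)).continuousAt)
    · exact continuousAt_const.mul
        ((Real.continuous_cos.comp (continuous_const.mul continuous_id)).continuousAt)
  have hD0 : D 0 ≠ 0 := by
    simp only [hD]
    norm_num
  have hne : ∀ᶠ z in 𝓝 (0:ℝ), D z ≠ 0 := hDc.eventually_ne hD0
  have hDinv : (fun z : ℝ => (D z)⁻¹) =O[𝓝 (0:ℝ)] (fun _ : ℝ => (1:ℝ)) :=
    (hDc.inv₀ hD0).tendsto.isBigO_one ℝ
  have heq : (fun z : ℝ => K z - z) =ᶠ[𝓝 (0:ℝ)]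
      fun z : ℝ => (N z - z * D z) * (D z)⁻¹ := by
    filter_upwards [hne] with z hz
    rw [hK z]
    show N z / D z - z = (N z - z * D z) * (D z)⁻¹
    rw [div_sub' hz, div_eq_mul_inv]
    ring_nf
  exact ((hg.mul hDinv).congr' heq.symm
    (Filter.Eventually.of_forall fun z => mul_one _))
end

section
/- The numerical wavenumber of the fourteenth-order compact scheme C14 (α₁ = 3/5, α₂ = 3/25, α₃ = 1/175, a₁ = 31/50, a₂ = 67/250, a₃ = 283/12250, a₄ = 1/9800), K(z) = ((31/25)·sin z + (67/125)·sin 2z + (283/6125)·sin 3z + (1/4900)·sin 4z) / (1 + (6/5)·cos z + (6/25)·cos 2z + (2/175)·cos 3z), satisfies K(z) − z = O(z¹⁵) as z → 0. -/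
open Filter Asymptotics Topology

noncomputable def Fc (a1 a2 a3 a4 b0 b1 b2 b3 b4 c1 c2 c3 d0 d1 d2 d3 : ℝ) (z : ℝ) : ℝ :=
  a1 * Real.sin (1*z) + a2 * Real.sin (2*z) + a3 * Real.sin (3*z) + a4 * Real.sin (4*z)
  + b0 + b1 * Real.cos (1*z) + b2 * Real.cos (2*z) + b3 * Real.cos (3*z) + b4 * Real.cos (4*z)
  + z * (c1 * Real.sin (1*z) + c2 * Real.sin (2*z) + c3 * Real.sin (3*z)
        + d0 + d1 * Real.cos (1*z) + d2 * Real.cos (2*z) + d3 * Real.cos (3*z))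

lemma hsin (k z : ℝ) : HasDerivAt (fun z : ℝ => Real.sin (k*z)) (k * Real.cos (k*z)) z := by
  simpa [mul_comm, Function.comp_def] using (Real.hasDerivAt_sin (k*z)).comp z ((hasDerivAt_id z).const_mul k)

lemma hcos (k z : ℝ) : HasDerivAt (fun z : ℝ => Real.cos (k*z)) (-(k * Real.sin (k*z))) z := by
  simpa [mul_comm, Function.comp_def] using (Real.hasDerivAt_cos (k*z)).comp z ((hasDerivAt_id z).const_mul k)

lemma myCongr {f : ℝ → ℝ} {f' g' x : ℝ} (h : HasDerivAt f f' x) (e : f' = g') :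
    HasDerivAt f g' x := e ▸ h

lemma Fc_hasDerivAt (a1 a2 a3 a4 b0 b1 b2 b3 b4 c1 c2 c3 d0 d1 d2 d3 z : ℝ) :
    HasDerivAt (Fc a1 a2 a3 a4 b0 b1 b2 b3 b4 c1 c2 c3 d0 d1 d2 d3)
      (Fc (c1 - 1*b1) (c2 - 2*b2) (c3 - 3*b3) (-(4*b4)) d0 (1*a1 + d1) (2*a2 + d2)
        (3*a3 + d3) (4*a4) (-(1*d1)) (-(2*d2)) (-(3*d3)) 0 (1*c1) (2*c2) (3*c3) z) z := by
  have Hin : HasDerivAt (fun z : ℝ => c1 * Real.sin (1*z) + c2 * Real.sin (2*z) + c3 * Real.sin (3*z)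
        + d0 + d1 * Real.cos (1*z) + d2 * Real.cos (2*z) + d3 * Real.cos (3*z))
      (c1 * (1 * Real.cos (1*z)) + c2 * (2 * Real.cos (2*z)) + c3 * (3 * Real.cos (3*z)) + 0
        + d1 * -(1 * Real.sin (1*z)) + d2 * -(2 * Real.sin (2*z)) + d3 * -(3 * Real.sin (3*z))) z :=
    ((((((((hsin 1 z).const_mul c1).add ((hsin 2 z).const_mul c2)).add
      ((hsin 3 z).const_mul c3)).add (hasDerivAt_const z d0)).add
      ((hcos 1 z).const_mul d1)).add ((hcos 2 z).const_mul d2)).add ((hcos 3 z).const_mul d3))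
  have H := (((((((((((hsin 1 z).const_mul a1).add ((hsin 2 z).const_mul a2)).add
      ((hsin 3 z).const_mul a3)).add ((hsin 4 z).const_mul a4)).add (hasDerivAt_const z b0)).add
      ((hcos 1 z).const_mul b1)).add ((hcos 2 z).const_mul b2)).add
      ((hcos 3 z).const_mul b3)).add ((hcos 4 z).const_mul b4)).add ((hasDerivAt_id z).mul Hin))
  exact myCongr H (by simp only [Fc, id_eq]; ring)

lemma step_O {f g : ℝ → ℝ} {n : ℕ} (hf : ∀ z, HasDerivAt f (g z) z)
    (h0 : f 0 = 0) (hg : g =O[𝓝 (0:ℝ)] fun z => z ^ n) :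
    f =O[𝓝 (0:ℝ)] fun z => z ^ (n+1) := by
  obtain ⟨C, hC0, hC⟩ := hg.exists_nonneg
  rw [isBigOWith_iff] at hC
  obtain ⟨δ, hδpos, hδ⟩ := Metric.eventually_nhds_iff.mp hC
  rw [isBigO_iff]
  refine ⟨C, Metric.eventually_nhds_iff.mpr ⟨δ, hδpos, fun {z} hz => ?_⟩⟩
  have hseg : ∀ t ∈ segment ℝ (0:ℝ) z, ‖g t‖ ≤ C * ‖z‖ ^ n := by
    intro t ht
    rw [segment_eq_uIcc] at ht
    have htz : |t| ≤ |z| := by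
      rcases le_total (0:ℝ) z with h|h
      · rw [Set.uIcc_of_le h] at ht
        rw [abs_le]
        constructor <;> linarith [neg_abs_le z, le_abs_self z, abs_nonneg z, ht.1, ht.2]
      · rw [Set.uIcc_of_ge h] at ht
        rw [abs_le]
        constructor <;> linarith [neg_abs_le z, le_abs_self z, abs_nonneg z, ht.1, ht.2]
    have hdt : dist t 0 < δ := by
      simp only [Real.dist_eq, sub_zero] at hz ⊢
      exact lt_of_le_of_lt htz hz
    calc ‖g t‖ ≤ C * ‖t ^ n‖ := hδ hdt
      _ ≤ C * ‖z‖ ^ n := by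
          rw [norm_pow]
          exact mul_le_mul_of_nonneg_left (pow_le_pow_left₀ (norm_nonneg t) htz n) hC0
  have key : ‖f z - f 0‖ ≤ (C * ‖z‖ ^ n) * ‖z - 0‖ :=
    Convex.norm_image_sub_le_of_norm_hasDerivWithin_le
      (fun t _ => (hf t).hasDerivWithinAt) hseg (convex_segment _ _)
      (left_mem_segment ℝ 0 z) (right_mem_segment ℝ 0 z)
  rw [h0, sub_zero, sub_zero] at key
  calc ‖f z‖ ≤ (C * ‖z‖ ^ n) * ‖z‖ := key
    _ = C * ‖z ^ (n+1)‖ := by rw [norm_pow]; ring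

noncomputable def fch0 : ℝ → ℝ := Fc ((31 : ℝ)/25) ((67 : ℝ)/125) ((283 : ℝ)/6125) ((1 : ℝ)/4900) (0 : ℝ) (0 : ℝ) (0 : ℝ) (0 : ℝ) (0 : ℝ) (0 : ℝ) (0 : ℝ) (0 : ℝ) (-1 : ℝ) ((-6 : ℝ)/5) ((-6 : ℝ)/25) ((-2 : ℝ)/175)

noncomputable def fch1 : ℝ → ℝ := Fc (0 : ℝ) (0 : ℝ) (0 : ℝ) (0 : ℝ) (-1 : ℝ) ((1 : ℝ)/25) ((104 : ℝ)/125) ((779 : ℝ)/6125) ((1 : ℝ)/1225) ((6 : ℝ)/5) ((12 : ℝ)/25) ((6 : ℝ)/175) (0 : ℝ) (0 : ℝ) (0 : ℝ) (0 : ℝ)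

noncomputable def fch2 : ℝ → ℝ := Fc ((29 : ℝ)/25) ((-148 : ℝ)/125) ((-2127 : ℝ)/6125) ((-4 : ℝ)/1225) (0 : ℝ) (0 : ℝ) (0 : ℝ) (0 : ℝ) (0 : ℝ) (0 : ℝ) (0 : ℝ) (0 : ℝ) (0 : ℝ) ((6 : ℝ)/5) ((24 : ℝ)/25) ((18 : ℝ)/175)

noncomputable def fch3 : ℝ → ℝ := Fc (0 : ℝ) (0 : ℝ) (0 : ℝ) (0 : ℝ) (0 : ℝ) ((59 : ℝ)/25) ((-176 : ℝ)/125) ((-5751 : ℝ)/6125) ((-16 : ℝ)/1225) ((-6 : ℝ)/5) ((-48 : ℝ)/25) ((-54 : ℝ)/175) (0 : ℝ) (0 : ℝ) (0 : ℝ) (0 : ℝ)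

noncomputable def fch4 : ℝ → ℝ := Fc ((-89 : ℝ)/25) ((112 : ℝ)/125) ((15363 : ℝ)/6125) ((64 : ℝ)/1225) (0 : ℝ) (0 : ℝ) (0 : ℝ) (0 : ℝ) (0 : ℝ) (0 : ℝ) (0 : ℝ) (0 : ℝ) (0 : ℝ) ((-6 : ℝ)/5) ((-96 : ℝ)/25) ((-162 : ℝ)/175)

noncomputable def fch5 : ℝ → ℝ := Fc (0 : ℝ) (0 : ℝ) (0 : ℝ) (0 : ℝ) (0 : ℝ) ((-119 : ℝ)/25) ((-256 : ℝ)/125) ((40419 : ℝ)/6125) ((256 : ℝ)/1225) ((6 : ℝ)/5) ((192 : ℝ)/25) ((486 : ℝ)/175) (0 : ℝ) (0 : ℝ) (0 : ℝ) (0 : ℝ)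

noncomputable def fch6 : ℝ → ℝ := Fc ((149 : ℝ)/25) ((1472 : ℝ)/125) ((-104247 : ℝ)/6125) ((-1024 : ℝ)/1225) (0 : ℝ) (0 : ℝ) (0 : ℝ) (0 : ℝ) (0 : ℝ) (0 : ℝ) (0 : ℝ) (0 : ℝ) (0 : ℝ) ((6 : ℝ)/5) ((384 : ℝ)/25) ((1458 : ℝ)/175)

noncomputable def fch7 : ℝ → ℝ := Fc (0 : ℝ) (0 : ℝ) (0 : ℝ) (0 : ℝ) (0 : ℝ) ((179 : ℝ)/25) ((4864 : ℝ)/125) ((-261711 : ℝ)/6125) ((-4096 : ℝ)/1225) ((-6 : ℝ)/5) ((-768 : ℝ)/25) ((-4374 : ℝ)/175) (0 : ℝ) (0 : ℝ) (0 : ℝ) (0 : ℝ)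

noncomputable def fch8 : ℝ → ℝ := Fc ((-209 : ℝ)/25) ((-13568 : ℝ)/125) ((632043 : ℝ)/6125) ((16384 : ℝ)/1225) (0 : ℝ) (0 : ℝ) (0 : ℝ) (0 : ℝ) (0 : ℝ) (0 : ℝ) (0 : ℝ) (0 : ℝ) (0 : ℝ) ((-6 : ℝ)/5) ((-1536 : ℝ)/25) ((-13122 : ℝ)/175)

noncomputable def fch9 : ℝ → ℝ := Fc (0 : ℝ) (0 : ℝ) (0 : ℝ) (0 : ℝ) (0 : ℝ) ((-239 : ℝ)/25) ((-34816 : ℝ)/125) ((1436859 : ℝ)/6125) ((65536 : ℝ)/1225) ((6 : ℝ)/5) ((3072 : ℝ)/25) ((39366 : ℝ)/175) (0 : ℝ) (0 : ℝ) (0 : ℝ) (0 : ℝ)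

noncomputable def fch10 : ℝ → ℝ := Fc ((269 : ℝ)/25) ((84992 : ℝ)/125) ((-2932767 : ℝ)/6125) ((-262144 : ℝ)/1225) (0 : ℝ) (0 : ℝ) (0 : ℝ) (0 : ℝ) (0 : ℝ) (0 : ℝ) (0 : ℝ) (0 : ℝ) (0 : ℝ) ((6 : ℝ)/5) ((6144 : ℝ)/25) ((118098 : ℝ)/175)

noncomputable def fch11 : ℝ → ℝ := Fc (0 : ℝ) (0 : ℝ) (0 : ℝ) (0 : ℝ) (0 : ℝ) ((299 : ℝ)/25) ((200704 : ℝ)/125) ((-4664871 : ℝ)/6125) ((-1048576 : ℝ)/1225) ((-6 : ℝ)/5) ((-12288 : ℝ)/25) ((-354294 : ℝ)/175) (0 : ℝ) (0 : ℝ) (0 : ℝ) (0 : ℝ)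

noncomputable def fch12 : ℝ → ℝ := Fc ((-329 : ℝ)/25) ((-462848 : ℝ)/125) ((1594323 : ℝ)/6125) ((4194304 : ℝ)/1225) (0 : ℝ) (0 : ℝ) (0 : ℝ) (0 : ℝ) (0 : ℝ) (0 : ℝ) (0 : ℝ) (0 : ℝ) (0 : ℝ) ((-6 : ℝ)/5) ((-24576 : ℝ)/25) ((-1062882 : ℝ)/175)

noncomputable def fch13 : ℝ → ℝ := Fc (0 : ℝ) (0 : ℝ) (0 : ℝ) (0 : ℝ) (0 : ℝ) ((-359 : ℝ)/25) ((-1048576 : ℝ)/125) ((-32417901 : ℝ)/6125) ((16777216 : ℝ)/1225) ((6 : ℝ)/5) ((49152 : ℝ)/25) ((3188646 : ℝ)/175) (0 : ℝ) (0 : ℝ) (0 : ℝ) (0 : ℝ)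

noncomputable def fch14 : ℝ → ℝ := Fc ((389 : ℝ)/25) ((2342912 : ℝ)/125) ((208856313 : ℝ)/6125) ((-67108864 : ℝ)/1225) (0 : ℝ) (0 : ℝ) (0 : ℝ) (0 : ℝ) (0 : ℝ) (0 : ℝ) (0 : ℝ) (0 : ℝ) (0 : ℝ) ((6 : ℝ)/5) ((98304 : ℝ)/25) ((9565938 : ℝ)/175)

noncomputable def fch15 : ℝ → ℝ := Fc (0 : ℝ) (0 : ℝ) (0 : ℝ) (0 : ℝ) (0 : ℝ) ((419 : ℝ)/25) ((5177344 : ℝ)/125) ((961376769 : ℝ)/6125) ((-268435456 : ℝ)/1225) ((-6 : ℝ)/5) ((-196608 : ℝ)/25) ((-28697814 : ℝ)/175) (0 : ℝ) (0 : ℝ) (0 : ℝ) (0 : ℝ)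

lemma fval0 : fch0 0 = 0 := by
  simp only [fch0, Fc]
  norm_num

lemma fder0 : ∀ z, HasDerivAt fch0 (fch1 z) z := fun z =>
  myCongr (Fc_hasDerivAt ((31 : ℝ)/25) ((67 : ℝ)/125) ((283 : ℝ)/6125) ((1 : ℝ)/4900) (0 : ℝ) (0 : ℝ) (0 : ℝ) (0 : ℝ) (0 : ℝ) (0 : ℝ) (0 : ℝ) (0 : ℝ) (-1 : ℝ) ((-6 : ℝ)/5) ((-6 : ℝ)/25) ((-2 : ℝ)/175) z) (by norm_num [fch1])

lemma fval1 : fch1 0 = 0 := by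
  simp only [fch1, Fc]
  norm_num

lemma fder1 : ∀ z, HasDerivAt fch1 (fch2 z) z := fun z =>
  myCongr (Fc_hasDerivAt (0 : ℝ) (0 : ℝ) (0 : ℝ) (0 : ℝ) (-1 : ℝ) ((1 : ℝ)/25) ((104 : ℝ)/125) ((779 : ℝ)/6125) ((1 : ℝ)/1225) ((6 : ℝ)/5) ((12 : ℝ)/25) ((6 : ℝ)/175) (0 : ℝ) (0 : ℝ) (0 : ℝ) (0 : ℝ) z) (by norm_num [fch2])

lemma fval2 : fch2 0 = 0 := by
  simp only [fch2, Fc]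
  norm_num

lemma fder2 : ∀ z, HasDerivAt fch2 (fch3 z) z := fun z =>
  myCongr (Fc_hasDerivAt ((29 : ℝ)/25) ((-148 : ℝ)/125) ((-2127 : ℝ)/6125) ((-4 : ℝ)/1225) (0 : ℝ) (0 : ℝ) (0 : ℝ) (0 : ℝ) (0 : ℝ) (0 : ℝ) (0 : ℝ) (0 : ℝ) (0 : ℝ) ((6 : ℝ)/5) ((24 : ℝ)/25) ((18 : ℝ)/175) z) (by norm_num [fch3])

lemma fval3 : fch3 0 = 0 := by
  simp only [fch3, Fc]
  norm_num

lemma fder3 : ∀ z, HasDerivAt fch3 (fch4 z) z := fun z =>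
  myCongr (Fc_hasDerivAt (0 : ℝ) (0 : ℝ) (0 : ℝ) (0 : ℝ) (0 : ℝ) ((59 : ℝ)/25) ((-176 : ℝ)/125) ((-5751 : ℝ)/6125) ((-16 : ℝ)/1225) ((-6 : ℝ)/5) ((-48 : ℝ)/25) ((-54 : ℝ)/175) (0 : ℝ) (0 : ℝ) (0 : ℝ) (0 : ℝ) z) (by norm_num [fch4])

lemma fval4 : fch4 0 = 0 := by
  simp only [fch4, Fc]
  norm_num

lemma fder4 : ∀ z, HasDerivAt fch4 (fch5 z) z := fun z =>
  myCongr (Fc_hasDerivAt ((-89 : ℝ)/25) ((112 : ℝ)/125) ((15363 : ℝ)/6125) ((64 : ℝ)/1225) (0 : ℝ) (0 : ℝ) (0 : ℝ) (0 : ℝ) (0 : ℝ) (0 : ℝ) (0 : ℝ) (0 : ℝ) (0 : ℝ) ((-6 : ℝ)/5) ((-96 : ℝ)/25) ((-162 : ℝ)/175) z) (by norm_num [fch5])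

lemma fval5 : fch5 0 = 0 := by
  simp only [fch5, Fc]
  norm_num

lemma fder5 : ∀ z, HasDerivAt fch5 (fch6 z) z := fun z =>
  myCongr (Fc_hasDerivAt (0 : ℝ) (0 : ℝ) (0 : ℝ) (0 : ℝ) (0 : ℝ) ((-119 : ℝ)/25) ((-256 : ℝ)/125) ((40419 : ℝ)/6125) ((256 : ℝ)/1225) ((6 : ℝ)/5) ((192 : ℝ)/25) ((486 : ℝ)/175) (0 : ℝ) (0 : ℝ) (0 : ℝ) (0 : ℝ) z) (by norm_num [fch6])

lemma fval6 : fch6 0 = 0 := by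
  simp only [fch6, Fc]
  norm_num

lemma fder6 : ∀ z, HasDerivAt fch6 (fch7 z) z := fun z =>
  myCongr (Fc_hasDerivAt ((149 : ℝ)/25) ((1472 : ℝ)/125) ((-104247 : ℝ)/6125) ((-1024 : ℝ)/1225) (0 : ℝ) (0 : ℝ) (0 : ℝ) (0 : ℝ) (0 : ℝ) (0 : ℝ) (0 : ℝ) (0 : ℝ) (0 : ℝ) ((6 : ℝ)/5) ((384 : ℝ)/25) ((1458 : ℝ)/175) z) (by norm_num [fch7])

lemma fval7 : fch7 0 = 0 := by
  simp only [fch7, Fc]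
  norm_num

lemma fder7 : ∀ z, HasDerivAt fch7 (fch8 z) z := fun z =>
  myCongr (Fc_hasDerivAt (0 : ℝ) (0 : ℝ) (0 : ℝ) (0 : ℝ) (0 : ℝ) ((179 : ℝ)/25) ((4864 : ℝ)/125) ((-261711 : ℝ)/6125) ((-4096 : ℝ)/1225) ((-6 : ℝ)/5) ((-768 : ℝ)/25) ((-4374 : ℝ)/175) (0 : ℝ) (0 : ℝ) (0 : ℝ) (0 : ℝ) z) (by norm_num [fch8])

lemma fval8 : fch8 0 = 0 := by
  simp only [fch8, Fc]
  norm_num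

lemma fder8 : ∀ z, HasDerivAt fch8 (fch9 z) z := fun z =>
  myCongr (Fc_hasDerivAt ((-209 : ℝ)/25) ((-13568 : ℝ)/125) ((632043 : ℝ)/6125) ((16384 : ℝ)/1225) (0 : ℝ) (0 : ℝ) (0 : ℝ) (0 : ℝ) (0 : ℝ) (0 : ℝ) (0 : ℝ) (0 : ℝ) (0 : ℝ) ((-6 : ℝ)/5) ((-1536 : ℝ)/25) ((-13122 : ℝ)/175) z) (by norm_num [fch9])

lemma fval9 : fch9 0 = 0 := by
  simp only [fch9, Fc]
  norm_num

lemma fder9 : ∀ z, HasDerivAt fch9 (fch10 z) z := fun z =>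
  myCongr (Fc_hasDerivAt (0 : ℝ) (0 : ℝ) (0 : ℝ) (0 : ℝ) (0 : ℝ) ((-239 : ℝ)/25) ((-34816 : ℝ)/125) ((1436859 : ℝ)/6125) ((65536 : ℝ)/1225) ((6 : ℝ)/5) ((3072 : ℝ)/25) ((39366 : ℝ)/175) (0 : ℝ) (0 : ℝ) (0 : ℝ) (0 : ℝ) z) (by norm_num [fch10])

lemma fval10 : fch10 0 = 0 := by
  simp only [fch10, Fc]
  norm_num

lemma fder10 : ∀ z, HasDerivAt fch10 (fch11 z) z := fun z =>
  myCongr (Fc_hasDerivAt ((269 : ℝ)/25) ((84992 : ℝ)/125) ((-2932767 : ℝ)/6125) ((-262144 : ℝ)/1225) (0 : ℝ) (0 : ℝ) (0 : ℝ) (0 : ℝ) (0 : ℝ) (0 : ℝ) (0 : ℝ) (0 : ℝ) (0 : ℝ) ((6 : ℝ)/5) ((6144 : ℝ)/25) ((118098 : ℝ)/175) z) (by norm_num [fch11])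

lemma fval11 : fch11 0 = 0 := by
  simp only [fch11, Fc]
  norm_num

lemma fder11 : ∀ z, HasDerivAt fch11 (fch12 z) z := fun z =>
  myCongr (Fc_hasDerivAt (0 : ℝ) (0 : ℝ) (0 : ℝ) (0 : ℝ) (0 : ℝ) ((299 : ℝ)/25) ((200704 : ℝ)/125) ((-4664871 : ℝ)/6125) ((-1048576 : ℝ)/1225) ((-6 : ℝ)/5) ((-12288 : ℝ)/25) ((-354294 : ℝ)/175) (0 : ℝ) (0 : ℝ) (0 : ℝ) (0 : ℝ) z) (by norm_num [fch12])

lemma fval12 : fch12 0 = 0 := by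
  simp only [fch12, Fc]
  norm_num

lemma fder12 : ∀ z, HasDerivAt fch12 (fch13 z) z := fun z =>
  myCongr (Fc_hasDerivAt ((-329 : ℝ)/25) ((-462848 : ℝ)/125) ((1594323 : ℝ)/6125) ((4194304 : ℝ)/1225) (0 : ℝ) (0 : ℝ) (0 : ℝ) (0 : ℝ) (0 : ℝ) (0 : ℝ) (0 : ℝ) (0 : ℝ) (0 : ℝ) ((-6 : ℝ)/5) ((-24576 : ℝ)/25) ((-1062882 : ℝ)/175) z) (by norm_num [fch13])

lemma fval13 : fch13 0 = 0 := by
  simp only [fch13, Fc]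
  norm_num

lemma fder13 : ∀ z, HasDerivAt fch13 (fch14 z) z := fun z =>
  myCongr (Fc_hasDerivAt (0 : ℝ) (0 : ℝ) (0 : ℝ) (0 : ℝ) (0 : ℝ) ((-359 : ℝ)/25) ((-1048576 : ℝ)/125) ((-32417901 : ℝ)/6125) ((16777216 : ℝ)/1225) ((6 : ℝ)/5) ((49152 : ℝ)/25) ((3188646 : ℝ)/175) (0 : ℝ) (0 : ℝ) (0 : ℝ) (0 : ℝ) z) (by norm_num [fch14])

lemma fval14 : fch14 0 = 0 := by
  simp only [fch14, Fc]
  norm_num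

lemma fder14 : ∀ z, HasDerivAt fch14 (fch15 z) z := fun z =>
  myCongr (Fc_hasDerivAt ((389 : ℝ)/25) ((2342912 : ℝ)/125) ((208856313 : ℝ)/6125) ((-67108864 : ℝ)/1225) (0 : ℝ) (0 : ℝ) (0 : ℝ) (0 : ℝ) (0 : ℝ) (0 : ℝ) (0 : ℝ) (0 : ℝ) (0 : ℝ) ((6 : ℝ)/5) ((98304 : ℝ)/25) ((9565938 : ℝ)/175) z) (by norm_num [fch15])

lemma Fc_continuous (a1 a2 a3 a4 b0 b1 b2 b3 b4 c1 c2 c3 d0 d1 d2 d3 : ℝ) :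
    Continuous (Fc a1 a2 a3 a4 b0 b1 b2 b3 b4 c1 c2 c3 d0 d1 d2 d3) := by
  unfold Fc; fun_prop

lemma hO15 : fch15 =O[𝓝 (0:ℝ)] fun z => z ^ 0 := by
  simp only [pow_zero]
  exact ((Fc_continuous _ _ _ _ _ _ _ _ _ _ _ _ _ _ _ _).tendsto 0).isBigO_one ℝ

lemma hO14 : fch14 =O[𝓝 (0:ℝ)] fun z => z ^ 1 := step_O fder14 fval14 hO15

lemma hO13 : fch13 =O[𝓝 (0:ℝ)] fun z => z ^ 2 := step_O fder13 fval13 hO14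

lemma hO12 : fch12 =O[𝓝 (0:ℝ)] fun z => z ^ 3 := step_O fder12 fval12 hO13

lemma hO11 : fch11 =O[𝓝 (0:ℝ)] fun z => z ^ 4 := step_O fder11 fval11 hO12

lemma hO10 : fch10 =O[𝓝 (0:ℝ)] fun z => z ^ 5 := step_O fder10 fval10 hO11

lemma hO9 : fch9 =O[𝓝 (0:ℝ)] fun z => z ^ 6 := step_O fder9 fval9 hO10

lemma hO8 : fch8 =O[𝓝 (0:ℝ)] fun z => z ^ 7 := step_O fder8 fval8 hO9

lemma hO7 : fch7 =O[𝓝 (0:ℝ)] fun z => z ^ 8 := step_O fder7 fval7 hO8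

lemma hO6 : fch6 =O[𝓝 (0:ℝ)] fun z => z ^ 9 := step_O fder6 fval6 hO7

lemma hO5 : fch5 =O[𝓝 (0:ℝ)] fun z => z ^ 10 := step_O fder5 fval5 hO6

lemma hO4 : fch4 =O[𝓝 (0:ℝ)] fun z => z ^ 11 := step_O fder4 fval4 hO5

lemma hO3 : fch3 =O[𝓝 (0:ℝ)] fun z => z ^ 12 := step_O fder3 fval3 hO4

lemma hO2 : fch2 =O[𝓝 (0:ℝ)] fun z => z ^ 13 := step_O fder2 fval2 hO3

lemma hO1 : fch1 =O[𝓝 (0:ℝ)] fun z => z ^ 14 := step_O fder1 fval1 hO2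

lemma hO0 : fch0 =O[𝓝 (0:ℝ)] fun z => z ^ 15 := step_O fder0 fval0 hO1

/-- The numerical wavenumber of the C14 compact scheme agrees with the exact
wavenumber `z` up to `O(z^15)` as `z → 0`. -/
theorem c14_wavenumber (K : ℝ → ℝ)
    (hK : ∀ z : ℝ, K z = ((31/25) * Real.sin z + (67/125) * Real.sin (2*z) + (283/6125) * Real.sin (3*z) + (1/4900) * Real.sin (4*z)) / (1 + (6/5) * Real.cos z + (6/25) * Real.cos (2*z) + (2/175) * Real.cos (3*z))) :
    (fun z : ℝ => K z - z) =O[𝓝 (0 : ℝ)] fun z : ℝ => z ^ 15 := by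
  set D : ℝ → ℝ := fun z => 1 + (6/5) * Real.cos z + (6/25) * Real.cos (2*z) + (2/175) * Real.cos (3*z) with hD
  have hDcont : Continuous D := by rw [hD]; fun_prop
  have hD0 : (0:ℝ) < D 0 := by norm_num [hD]
  have hDpos : ∀ᶠ z in 𝓝 (0:ℝ), 0 < D z :=
    (hDcont.tendsto 0).eventually (eventually_gt_nhds hD0)
  have hDinv : (fun z => (D z)⁻¹) =O[𝓝 (0:ℝ)] (fun _ => (1:ℝ)) :=
    ((hDcont.tendsto 0).inv₀ (ne_of_gt hD0)).isBigO_one ℝ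
  have hmain : (fun z => fch0 z * (D z)⁻¹) =O[𝓝 (0:ℝ)] fun z => z ^ 15 := by
    have := hO0.mul hDinv
    simpa using this
  refine hmain.congr' ?_ EventuallyEq.rfl
  filter_upwards [hDpos] with z hz
  have hDz : D z ≠ 0 := ne_of_gt hz
  rw [hK z]
  simp only [hD] at hDz ⊢
  rw [eq_comm, sub_eq_iff_eq_add, div_eq_iff hDz, add_mul, mul_assoc,
    inv_mul_cancel₀ hDz, mul_one]
  simp only [fch0, Fc, one_mul]
  ring
end

section
/- The numerical wavenumber of the sixteenth-order compact scheme C16 (α₁ = 16/25, α₂ = 4/25, α₃ = 16/1225, α₄ = 1/4900, a₁ = 72/125, a₂ = 38/125, a₃ = 1784/42875, a₄ = 761/686000), K(z) = ((144/125)·sin z + (76/125)·sin 2z + (3568/42875)·sin 3z + (761/343000)·sin 4z) / (1 + (32/25)·cos z + (8/25)·cos 2z + (32/1225)·cos 3z + (1/2450)·cos 4z), satisfies K(z) − z = O(z¹⁷) as z → 0. -/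
open Filter Asymptotics Topology

/-- Taylor coefficients (at odd powers) of `N(z) - z·D(z)` for the C16 scheme. -/
noncomputable def c16cc (n : ℕ) : ℝ :=
  (-1) ^ n *
    (((144/125) * (1:ℝ) ^ (2*n+1) + (76/125) * (2:ℝ) ^ (2*n+1) +
        (3568/42875) * (3:ℝ) ^ (2*n+1) + (761/343000) * (4:ℝ) ^ (2*n+1)) /
        (Nat.factorial (2*n+1) : ℝ) -
      ((if n = 0 then (1:ℝ) else 0) + (32/25) * (1:ℝ) ^ (2*n) + (8/25) * (2:ℝ) ^ (2*n) +
        (32/1225) * (3:ℝ) ^ (2*n) + (1/2450) * (4:ℝ) ^ (2*n)) / (Nat.factorial (2*n) : ℝ))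

lemma c16cc_hasSum (z : ℝ) :
    HasSum (fun n : ℕ => c16cc n * z ^ (2*n+1))
      (((144/125) * Real.sin z + (76/125) * Real.sin (2*z) + (3568/42875) * Real.sin (3*z) +
          (761/343000) * Real.sin (4*z)) -
        z * (1 + (32/25) * Real.cos z + (8/25) * Real.cos (2*z) + (32/1225) * Real.cos (3*z) +
          (1/2450) * Real.cos (4*z))) := by
  have h1 := (Real.hasSum_sin z).mul_left (144/125)
  have h2 := (Real.hasSum_sin (2*z)).mul_left (76/125)
  have h3 := (Real.hasSum_sin (3*z)).mul_left (3568/42875)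
  have h4 := (Real.hasSum_sin (4*z)).mul_left (761/343000)
  have g0 : HasSum (fun n : ℕ => if n = 0 then z else 0) z := hasSum_ite_eq 0 z
  have g1 := ((Real.hasSum_cos z).mul_left (32/25)).mul_left z
  have g2 := ((Real.hasSum_cos (2*z)).mul_left (8/25)).mul_left z
  have g3 := ((Real.hasSum_cos (3*z)).mul_left (32/1225)).mul_left z
  have g4 := ((Real.hasSum_cos (4*z)).mul_left (1/2450)).mul_left z
  have H := (((h1.add h2).add h3).add h4).sub ((((g0.add g1).add g2).add g3).add g4)
  convert H using 1
  · rfl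
  · funext n
    rcases Nat.eq_zero_or_pos n with hn | hn
    · subst hn
      simp [c16cc, Nat.factorial]
      ring
    · have hn0 : n ≠ 0 := hn.ne'
      simp only [c16cc, hn0, if_false, mul_pow, one_pow]
      ring
  · ring

lemma c16cc_zero : ∀ n < 8, c16cc n = 0 := by
  intro n hn
  interval_cases n <;> norm_num [c16cc, Nat.factorial]

lemma c16cc_bound (n : ℕ) : |c16cc n| ≤ 11 * 16 ^ n / (Nat.factorial (2*n) : ℝ) := by
  have hfac_pos : (0:ℝ) < (Nat.factorial (2*n) : ℝ) := by positivity
  have hfac_pos' : (0:ℝ) < (Nat.factorial (2*n+1) : ℝ) := by positivity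
  have hfacle : (Nat.factorial (2*n) : ℝ) ≤ (Nat.factorial (2*n+1) : ℝ) :=
    Nat.cast_le.mpr (Nat.factorial_le (by omega))
  set A : ℝ := ((144/125) * (1:ℝ) ^ (2*n+1) + (76/125) * (2:ℝ) ^ (2*n+1) +
      (3568/42875) * (3:ℝ) ^ (2*n+1) + (761/343000) * (4:ℝ) ^ (2*n+1)) with hA
  set B : ℝ := ((if n = 0 then (1:ℝ) else 0) + (32/25) * (1:ℝ) ^ (2*n) + (8/25) * (2:ℝ) ^ (2*n) +
      (32/1225) * (3:ℝ) ^ (2*n) + (1/2450) * (4:ℝ) ^ (2*n)) with hB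
  have hApos : 0 ≤ A := by rw [hA]; positivity
  have hBpos : 0 ≤ B := by rw [hB]; split_ifs <;> positivity
  have h4pos : (0:ℝ) ≤ (4:ℝ) ^ (2*n) := by positivity
  have hAle : A ≤ 8 * 16 ^ n := by
    have e1 : (1:ℝ) ^ (2*n+1) ≤ (4:ℝ) ^ (2*n+1) := by gcongr <;> norm_num
    have e2 : (2:ℝ) ^ (2*n+1) ≤ (4:ℝ) ^ (2*n+1) := by gcongr <;> norm_num
    have e3 : (3:ℝ) ^ (2*n+1) ≤ (4:ℝ) ^ (2*n+1) := by gcongr <;> norm_num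
    have e4 : (4:ℝ) ^ (2*n+1) = 4 * 16 ^ n := by
      rw [pow_succ, pow_mul]; norm_num [mul_comm]
    rw [hA]
    nlinarith [pow_nonneg (by norm_num : (0:ℝ) ≤ 4) (2*n+1)]
  have hBle : B ≤ 3 * 16 ^ n := by
    have e1 : (1:ℝ) ^ (2*n) ≤ (4:ℝ) ^ (2*n) := by gcongr <;> norm_num
    have e2 : (2:ℝ) ^ (2*n) ≤ (4:ℝ) ^ (2*n) := by gcongr <;> norm_num
    have e3 : (3:ℝ) ^ (2*n) ≤ (4:ℝ) ^ (2*n) := by gcongr <;> norm_num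
    have e4 : (4:ℝ) ^ (2*n) = 16 ^ n := by rw [pow_mul]; norm_num
    have eif : (if n = 0 then (1:ℝ) else 0) ≤ (4:ℝ) ^ (2*n) := by
      split_ifs with h
      · subst h; norm_num
      · positivity
    rw [hB]
    nlinarith [pow_nonneg (by norm_num : (0:ℝ) ≤ 4) (2*n)]
  have key : |c16cc n| ≤ A / (Nat.factorial (2*n+1) : ℝ) + B / (Nat.factorial (2*n) : ℝ) := by
    have : c16cc n = (-1) ^ n * (A / (Nat.factorial (2*n+1) : ℝ) - B / (Nat.factorial (2*n) : ℝ)) := by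
      rw [c16cc, hA, hB]
    rw [this, abs_mul, abs_pow, abs_neg, abs_one, one_pow, one_mul]
    calc |A / (Nat.factorial (2*n+1) : ℝ) - B / (Nat.factorial (2*n) : ℝ)|
        ≤ |A / (Nat.factorial (2*n+1) : ℝ)| + |B / (Nat.factorial (2*n) : ℝ)| := abs_sub _ _
      _ = A / (Nat.factorial (2*n+1) : ℝ) + B / (Nat.factorial (2*n) : ℝ) := by
          rw [abs_of_nonneg (by positivity), abs_of_nonneg (by positivity)]
  calc |c16cc n| ≤ A / (Nat.factorial (2*n+1) : ℝ) + B / (Nat.factorial (2*n) : ℝ) := key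
    _ ≤ (8 * 16 ^ n) / (Nat.factorial (2*n) : ℝ) + (3 * 16 ^ n) / (Nat.factorial (2*n) : ℝ) := by
        gcongr
    _ = 11 * 16 ^ n / (Nat.factorial (2*n) : ℝ) := by ring

lemma c16_u_summable : Summable (fun n : ℕ => 11 * 16 ^ n / (Nat.factorial (2*n) : ℝ)) := by
  refine Summable.of_nonneg_of_le (fun n => by positivity) ?_
    ((Real.summable_pow_div_factorial 16).mul_left 11)
  · intro n
    have h1 : (Nat.factorial n : ℝ) ≤ (Nat.factorial (2*n) : ℝ) :=
      Nat.cast_le.mpr (Nat.factorial_le (by omega))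
    have h2 : (0:ℝ) < (Nat.factorial n : ℝ) := by positivity
    have h3 : (0:ℝ) ≤ (16:ℝ) ^ n := by positivity
    rw [mul_div_assoc]
    gcongr

/-- The numerical wavenumber of the C16 compact scheme agrees with the exact
wavenumber `z` up to `O(z^17)` as `z → 0`. -/
theorem c16_wavenumber (K : ℝ → ℝ)
    (hK : ∀ z : ℝ, K z = ((144/125) * Real.sin z + (76/125) * Real.sin (2*z) + (3568/42875) * Real.sin (3*z) + (761/343000) * Real.sin (4*z)) / (1 + (32/25) * Real.cos z + (8/25) * Real.cos (2*z) + (32/1225) * Real.cos (3*z) + (1/2450) * Real.cos (4*z))) :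
    (fun z : ℝ => K z - z) =O[𝓝 (0 : ℝ)] fun z : ℝ => z ^ 17 := by
  set u : ℕ → ℝ := fun n => 11 * 16 ^ n / (Nat.factorial (2*n) : ℝ) with hu
  have hu_sum : Summable u := c16_u_summable
  have hu_shift : Summable (fun m : ℕ => u (m + 8)) := (summable_nat_add_iff 8).mpr hu_sum
  set M : ℝ := ∑' m : ℕ, u (m + 8) with hM
  -- key pointwise bound for |z| ≤ 1
  set N : ℝ → ℝ := fun z => (144/125) * Real.sin z + (76/125) * Real.sin (2*z) +
    (3568/42875) * Real.sin (3*z) + (761/343000) * Real.sin (4*z) with hN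
  set D : ℝ → ℝ := fun z => 1 + (32/25) * Real.cos z + (8/25) * Real.cos (2*z) +
    (32/1225) * Real.cos (3*z) + (1/2450) * Real.cos (4*z) with hD
  have key : ∀ z : ℝ, |z| ≤ 1 → |N z - z * D z| ≤ M * |z| ^ 17 := by
    intro z hz
    have H : HasSum (fun n : ℕ => c16cc n * z ^ (2*n+1)) (N z - z * D z) := c16cc_hasSum z
    have hvan : ∀ x ∉ Set.range (fun m : ℕ => m + 8), c16cc x * z ^ (2*x+1) = 0 := by
      intro x hx
      have hx8 : x < 8 := by
        by_contra h
        have hxe : x - 8 + 8 = x := by omega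
        exact hx ⟨x - 8, hxe⟩
      rw [c16cc_zero x hx8, zero_mul]
    have H2 : HasSum (fun m : ℕ => c16cc (m + 8) * z ^ (2*(m+8)+1)) (N z - z * D z) :=
      ((Function.Injective.hasSum_iff (add_left_injective 8) hvan).mpr H)
    have hterm : ∀ m : ℕ, ‖c16cc (m + 8) * z ^ (2*(m+8)+1)‖ ≤ u (m + 8) * |z| ^ 17 := by
      intro m
      have h1 : |z| ^ (2*(m+8)+1) ≤ |z| ^ 17 :=
        pow_le_pow_of_le_one (abs_nonneg z) hz (by omega)
      calc ‖c16cc (m + 8) * z ^ (2*(m+8)+1)‖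
          = |c16cc (m + 8)| * |z| ^ (2*(m+8)+1) := by
            rw [Real.norm_eq_abs, abs_mul, abs_pow]
        _ ≤ (u (m + 8)) * |z| ^ 17 := by
            apply mul_le_mul (c16cc_bound (m + 8)) h1 (by positivity) (by positivity)
    have hsummable : Summable (fun m : ℕ => ‖c16cc (m + 8) * z ^ (2*(m+8)+1)‖) :=
      Summable.of_nonneg_of_le (fun m => norm_nonneg _) hterm
        (by simpa [mul_comm] using hu_shift.mul_left (|z| ^ 17))
    calc |N z - z * D z| = ‖∑' m : ℕ, c16cc (m + 8) * z ^ (2*(m+8)+1)‖ := by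
          rw [H2.tsum_eq, Real.norm_eq_abs]
      _ ≤ ∑' m : ℕ, ‖c16cc (m + 8) * z ^ (2*(m+8)+1)‖ := norm_tsum_le_tsum_norm hsummable
      _ ≤ ∑' m : ℕ, u (m + 8) * |z| ^ 17 :=
          Summable.tsum_le_tsum hterm hsummable (by simpa [mul_comm] using hu_shift.mul_left (|z| ^ 17))
      _ = M * |z| ^ 17 := by
          rw [tsum_mul_right]
  -- denominator stays above 1 near 0
  have hDc : ContinuousAt D 0 := by fun_prop
  have hD0 : (1:ℝ) < D 0 := by
    simp only [hD, mul_zero, Real.cos_zero]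
    norm_num
  have hDev : ∀ᶠ z : ℝ in 𝓝 0, 1 < D z := hDc.tendsto.eventually_const_lt hD0
  have hzev : ∀ᶠ z : ℝ in 𝓝 (0:ℝ), |z| < 1 := by
    simpa using eventually_abs_sub_lt (0:ℝ) one_pos
  rw [isBigO_iff]
  refine ⟨M, ?_⟩
  filter_upwards [hDev, hzev] with z hDz hz1
  have hDne : D z ≠ 0 := by linarith
  have hKz : K z - z = (N z - z * D z) / D z := by
    rw [hK z]
    show N z / D z - z = _
    rw [eq_div_iff hDne, sub_mul, div_mul_cancel₀ _ hDne]
  have hDabs : (1:ℝ) ≤ |D z| := by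
    rw [abs_of_pos (by linarith)]; linarith
  calc ‖K z - z‖ = |N z - z * D z| / |D z| := by
        rw [hKz, Real.norm_eq_abs, abs_div]
    _ ≤ |N z - z * D z| := div_le_self (abs_nonneg _) hDabs
    _ ≤ M * |z| ^ 17 := key z hz1.le
    _ = M * ‖z ^ 17‖ := by rw [Real.norm_eq_abs, abs_pow]
end

section
/- Let β = 1/2 − 1/(2√3) (the PC4 coefficient, with b₁ = 1) and for z ∈ ℝ set D(z) = (1 − β) + β·e^{iz}. Then for every real z, D(z) ≠ 0 and Im[(e^{iz} − 1)·conj(D(z))] / |D(z)|² = (3/2)·sin z / (1 + (1/2)·cos z); that is, the averaged numerical wavenumber of the prefactored PC4 scheme equals exactly the numerical wavenumber of the classical fourth-order compact scheme C4 (α₁ = 1/4, a₁ = 3/4). -/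
open Complex

/-- The averaged numerical wavenumber of the prefactored PC4 scheme
(`β = 1/2 − 1/(2√3)`, `b₁ = 1`) equals exactly the numerical wavenumber of the
classical fourth-order compact scheme C4 (`α₁ = 1/4`, `a₁ = 3/4`). -/
theorem pc4_averaged_wavenumber_eq_c4
    (β : ℝ) (hβ : β = 1/2 - 1/(2 * Real.sqrt 3))
    (D : ℝ → ℂ)
    (hD : ∀ z : ℝ, D z = ((1 - β : ℝ) : ℂ) + (β : ℂ) * Complex.exp (Complex.I * (z : ℂ))) :
    ∀ z : ℝ, D z ≠ 0 ∧
      ((Complex.exp (Complex.I * (z : ℂ)) - 1) * (starRingEnd ℂ) (D z)).im /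
          ‖D z‖ ^ 2
        = ((3/2) * Real.sin z) / (1 + (1/2) * Real.cos z) := by
  intro z
  have h3 : Real.sqrt 3 ^ 2 = 3 := Real.sq_sqrt (by norm_num)
  have h3pos : (0:ℝ) < Real.sqrt 3 := Real.sqrt_pos.mpr (by norm_num)
  have hb : β * (1 - β) = 1/6 := by
    rw [hβ]; field_simp; nlinarith [h3]
  have hexp : Complex.exp (Complex.I * (z : ℂ))
      = ((Real.cos z : ℝ) : ℂ) + ((Real.sin z : ℝ) : ℂ) * Complex.I := by
    rw [mul_comm, Complex.exp_mul_I, Complex.ofReal_cos, Complex.ofReal_sin]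
  set c := Real.cos z with hc
  set s := Real.sin z with hs
  have hre : (D z).re = (1 - β) + β * c := by
    rw [hD, hexp]; simp
  have him : (D z).im = β * s := by
    rw [hD, hexp]; simp
  have hcb : c ≥ -1 := Real.neg_one_le_cos z
  have hcb' : c ≤ 1 := Real.cos_le_one z
  have habs : ‖D z‖ ^ 2 = 2/3 + (1/3) * c := by
    rw [Complex.sq_norm, Complex.normSq_apply, hre, him]
    have hsc : s ^ 2 + c ^ 2 = 1 := Real.sin_sq_add_cos_sq z
    linear_combination β ^ 2 * hsc + (2 * c - 2) * hb
  have hdpos : (0:ℝ) < 2/3 + (1/3) * c := by nlinarith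
  constructor
  · intro h
    rw [h] at habs
    simp at habs
    nlinarith
  · have hnum : ((Complex.exp (Complex.I * (z : ℂ)) - 1) * (starRingEnd ℂ) (D z)).im = s := by
      rw [Complex.mul_im, hexp]
      simp [Complex.conj_re, Complex.conj_im, hre, him]
      ring_nf
    rw [hnum, habs]
    have h1 : (0:ℝ) < 1 + (1/2) * c := by nlinarith
    field_simp
end

section
/- Let β = 1/2 − 1/(2√5), b₂ = 1/(30(1 − β)), b₁ = 14/15 − 2β·b₂ (the PC6 coefficients) and for z ∈ ℝ set D(z) = (1 − β) + β·e^{iz} and N(z) = b₁(e^{iz} − 1) + b₂(e^{2iz} − 1). Then for every real z, D(z) ≠ 0 and Im[N(z)·conj(D(z))] / |D(z)|² = ((14/9)·sin z + (1/18)·sin 2z) / (1 + (2/3)·cos z); that is, the averaged numerical wavenumber of the prefactored PC6 scheme equals exactly the numerical wavenumber of the classical sixth-order compact scheme C6 (α₁ = 1/3, a₁ = 7/9, a₂ = 1/36). -/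
open Complex

/-- The averaged numerical wavenumber of the prefactored PC6 scheme
(`β = 1/2 − 1/(2√5)`, `b₂ = 1/(30(1−β))`, `b₁ = 14/15 − 2β·b₂`) equals exactly the
numerical wavenumber of the classical sixth-order compact scheme C6
(`α₁ = 1/3`, `a₁ = 7/9`, `a₂ = 1/36`). -/
theorem pc6_averaged_wavenumber_eq_c6
    (β b₁ b₂ : ℝ)
    (hβ : β = 1/2 - 1/(2 * Real.sqrt 5))
    (hb₂ : b₂ = 1/(30 * (1 - β)))
    (hb₁ : b₁ = 14/15 - 2 * β * b₂)
    (D N : ℝ → ℂ)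
    (hD : ∀ z : ℝ, D z = ((1 - β : ℝ) : ℂ) + (β : ℂ) * Complex.exp (Complex.I * (z : ℂ)))
    (hN : ∀ z : ℝ, N z = (b₁ : ℂ) * (Complex.exp (Complex.I * (z : ℂ)) - 1)
        + (b₂ : ℂ) * (Complex.exp (2 * Complex.I * (z : ℂ)) - 1)) :
    ∀ z : ℝ, D z ≠ 0 ∧
      (N z * (starRingEnd ℂ) (D z)).im / ‖D z‖ ^ 2
        = ((14/9) * Real.sin z + (1/18) * Real.sin (2*z)) / (1 + (2/3) * Real.cos z) := by
  intro z
  have h5 : Real.sqrt 5 ^ 2 = 5 := Real.sq_sqrt (by norm_num)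
  have hrpos : (0:ℝ) < Real.sqrt 5 := Real.sqrt_pos.mpr (by norm_num)
  have hrlt : Real.sqrt 5 < 3 := by nlinarith [h5, hrpos]
  set r := Real.sqrt 5 with hr
  have hrne : r ≠ 0 := ne_of_gt hrpos
  have hβ2 : β = (5 - r)/10 := by
    rw [hβ]
    field_simp
    nlinarith [h5]
  have h1β : (1:ℝ) - β = (5 + r)/10 := by rw [hβ2]; ring
  have h1βne : (1:ℝ) - β ≠ 0 := by rw [h1β]; positivity
  have hb₂2 : b₂ = (5 - r)/60 := by
    rw [hb₂, h1β]
    rw [div_eq_div_iff (by positivity) (by norm_num : (60:ℝ) ≠ 0)]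
    nlinarith [h5]
  have hexp : ∀ w : ℝ, Complex.exp (Complex.I * (w:ℂ))
      = (Real.cos w : ℂ) + (Real.sin w : ℂ) * Complex.I := by
    intro w
    rw [mul_comm, Complex.exp_mul_I, ← Complex.ofReal_cos, ← Complex.ofReal_sin]
  have hexp2 : Complex.exp (2 * Complex.I * (z:ℂ))
      = (Real.cos (2*z) : ℂ) + (Real.sin (2*z) : ℂ) * Complex.I := by
    have h : (2 : ℂ) * Complex.I * z = Complex.I * ((2*z : ℝ) : ℂ) := by push_cast; ring
    rw [h, hexp]
  have hre : (D z).re = (1-β) + β * Real.cos z := by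
    rw [hD, hexp]; simp only [Complex.add_re, Complex.sub_re, Complex.mul_re, Complex.add_im,
      Complex.sub_im, Complex.mul_im, Complex.ofReal_re, Complex.ofReal_im,
      Complex.I_re, Complex.I_im, Complex.one_re, Complex.one_im]; ring
  have him : (D z).im = β * Real.sin z := by
    rw [hD, hexp]; simp only [Complex.add_re, Complex.sub_re, Complex.mul_re, Complex.add_im,
      Complex.sub_im, Complex.mul_im, Complex.ofReal_re, Complex.ofReal_im,
      Complex.I_re, Complex.I_im, Complex.one_re, Complex.one_im]; ring
  have hNre : (N z).re = b₁ * (Real.cos z - 1) + b₂ * (Real.cos (2*z) - 1) := by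
    rw [hN, hexp, hexp2]; simp only [Complex.add_re, Complex.sub_re, Complex.mul_re, Complex.add_im,
      Complex.sub_im, Complex.mul_im, Complex.ofReal_re, Complex.ofReal_im,
      Complex.I_re, Complex.I_im, Complex.one_re, Complex.one_im]; ring
  have hNim : (N z).im = b₁ * Real.sin z + b₂ * Real.sin (2*z) := by
    rw [hN, hexp, hexp2]; simp only [Complex.add_re, Complex.sub_re, Complex.mul_re, Complex.add_im,
      Complex.sub_im, Complex.mul_im, Complex.ofReal_re, Complex.ofReal_im,
      Complex.I_re, Complex.I_im, Complex.one_re, Complex.one_im]; ring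
  have hsc : Real.sin z ^ 2 + Real.cos z ^ 2 = 1 := Real.sin_sq_add_cos_sq z
  have habs : ‖D z‖ ^ 2 = 3/5 + 2/5 * Real.cos z := by
    rw [Complex.sq_norm, Complex.normSq_apply, hre, him, hβ2]
    linear_combination ((5 - r)^2/100) * hsc + ((1 - Real.cos z)/50) * h5
  have hdpos : (0:ℝ) < 3/5 + 2/5 * Real.cos z := by
    nlinarith [Real.neg_one_le_cos z]
  have hDne : D z ≠ 0 := by
    intro h
    rw [h] at habs
    simp at habs
    linarith
  refine ⟨hDne, ?_⟩
  have hA : b₁ + 2 * β * b₂ = 14/15 := by rw [hb₁]; ring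
  have hB : 2 * b₂ * (1 - β) = 1/15 := by
    rw [hb₂]; field_simp; ring
  have hmul : (N z * (starRingEnd ℂ) (D z)).im
      = (N z).im * (D z).re - (N z).re * (D z).im := by
    simp [Complex.mul_im]; ring
  have hnum : (N z * (starRingEnd ℂ) (D z)).im
      = (14/15) * Real.sin z + (1/15) * (Real.sin z * Real.cos z) := by
    rw [hmul, hNre, hNim, hre, him, Real.sin_two_mul, Real.cos_two_mul]
    linear_combination (Real.sin z) * hA + (Real.sin z * Real.cos z) * hB
  rw [hnum, habs, Real.sin_two_mul]
  have hd2pos : (0:ℝ) < 1 + 2/3 * Real.cos z := by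
    nlinarith [Real.neg_one_le_cos z]
  rw [div_eq_div_iff (by positivity) (by positivity)]
  ring
end

section
/- Let a = 1/2 − 1/(2√5), b = 1 − 1/(30a), c = 0 (Hixon's sixth-order prefactored coefficients) and for z ∈ ℝ set D(z) = a·e^{iz} + (1 − a) and N(z) = b·e^{iz} − (2b − 1) − (1 − b)·e^{−iz}. Then for every real z, D(z) ≠ 0 and Im[N(z)·conj(D(z))] / |D(z)|² = ((14/9)·sin z + (1/18)·sin 2z) / (1 + (2/3)·cos z); that is, the averaged numerical wavenumber of Hixon's prefactored scheme equals exactly the numerical wavenumber of the classical sixth-order compact scheme C6. -/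
open Complex

/-- The averaged numerical wavenumber of Hixon's sixth-order prefactored scheme
(`a = 1/2 − 1/(2√5)`, `b = 1 − 1/(30a)`, `c = 0`) equals exactly the numerical
wavenumber of the classical sixth-order compact scheme C6. -/
theorem hixon_averaged_wavenumber_eq_c6
    (a b c : ℝ)
    (ha : a = 1/2 - 1/(2 * Real.sqrt 5))
    (hb : b = 1 - 1/(30 * a))
    (hc : c = 0)
    (D N : ℝ → ℂ)
    (hD : ∀ z : ℝ, D z = (a : ℂ) * Complex.exp (Complex.I * (z : ℂ)) + ((1 - a : ℝ) : ℂ))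
    (hN : ∀ z : ℝ, N z = (b : ℂ) * Complex.exp (Complex.I * (z : ℂ)) - ((2*b - 1 : ℝ) : ℂ)
        - ((1 - b : ℝ) : ℂ) * Complex.exp (-(Complex.I * (z : ℂ)))) :
    ∀ z : ℝ, D z ≠ 0 ∧
      (N z * (starRingEnd ℂ) (D z)).im / ‖D z‖ ^ 2
        = ((14/9) * Real.sin z + (1/18) * Real.sin (2*z)) / (1 + (2/3) * Real.cos z) := by
  have h5 : Real.sqrt 5 ^ 2 = 5 := Real.sq_sqrt (by norm_num)
  have h5pos : (0:ℝ) < Real.sqrt 5 := Real.sqrt_pos.mpr (by norm_num)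
  have h5gt : (2:ℝ) < Real.sqrt 5 := by nlinarith
  have hapos : 0 < a := by
    rw [ha]
    have : 1/(2 * Real.sqrt 5) < 1/2 := by
      rw [div_lt_div_iff₀ (by positivity) (by norm_num)]
      nlinarith
    linarith
  have hA : a * (1 - a) = 1/5 := by
    rw [ha]
    field_simp
    nlinarith
  have hB : a * (1 - b) = 1/30 := by
    rw [hb]
    field_simp
    ring
  intro z
  have hexp : Complex.exp (Complex.I * (z : ℂ))
      = (Real.cos z : ℂ) + (Real.sin z : ℂ) * Complex.I := by
    rw [mul_comm, Complex.exp_mul_I, ← Complex.ofReal_cos, ← Complex.ofReal_sin]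
  have hexp' : Complex.exp (-(Complex.I * (z : ℂ)))
      = (Real.cos z : ℂ) - (Real.sin z : ℂ) * Complex.I := by
    have : -(Complex.I * (z : ℂ)) = ((-z : ℝ) : ℂ) * Complex.I := by
      push_cast; ring
    rw [this, Complex.exp_mul_I, ← Complex.ofReal_cos, ← Complex.ofReal_sin,
      Real.cos_neg, Real.sin_neg]
    push_cast; ring
  set s := Real.sin z with hs
  set cz := Real.cos z with hcz
  have hsc : s ^ 2 + cz ^ 2 = 1 := Real.sin_sq_add_cos_sq z
  have hDre : (D z).re = a * cz + (1 - a) := by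
    rw [hD z, hexp]; simp
  have hDim : (D z).im = a * s := by
    rw [hD z, hexp]; simp
  have habs : ‖D z‖ ^ 2 = 3/5 + 2/5 * cz := by
    rw [Complex.sq_norm, Complex.normSq_apply, hDre, hDim]
    linear_combination a^2 * hsc + (2*cz - 2) * hA
  have hdenpos : (0:ℝ) < 3/5 + 2/5 * cz := by
    have := Real.neg_one_le_cos z
    rw [← hcz] at this
    linarith
  have hDne : D z ≠ 0 := by
    intro h
    rw [h] at habs
    simp at habs
    linarith
  refine ⟨hDne, ?_⟩
  have hIm : (N z * (starRingEnd ℂ) (D z)).im = s * (14/15 + (1/15) * cz) := by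
    rw [Complex.mul_im]
    have hNre : (N z).re = (2*b - 1) * (cz - 1) := by
      rw [hN z, hexp, hexp']; simp; ring
    have hNim : (N z).im = s := by
      rw [hN z, hexp, hexp']; simp; ring
    rw [Complex.conj_re, Complex.conj_im, hNre, hNim, hDre, hDim]
    linear_combination (2*s*cz - 2*s) * hB
  rw [hIm, habs, Real.sin_two_mul, ← hs, ← hcz]
  have h23 : (0:ℝ) < 1 + 2/3 * cz := by linarith
  rw [div_eq_div_iff (by linarith) (by linarith)]
  ring
end

section
/- Let β = 1/2 − 1/(2√3) and define the averaged numerical wavenumber of the prefactored PC4 scheme by K̄(z) = Im[(e^{iz} − 1)·conj((1 − β) + β·e^{iz})] / |(1 − β) + β·e^{iz}|². Then K̄(z) − z = O(z⁵) as z → 0; that is, the prefactored PC4 scheme preserves the fourth order of accuracy of the original compact scheme. -/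
open Complex Filter Asymptotics Topology

private lemma pc4_sum_id (x : ℝ) :
    (∑ m ∈ Finset.range 5, (-(x:ℂ)*I)^m / m.factorial)
      - ∑ m ∈ Finset.range 5, ((x:ℂ)*I)^m / m.factorial = (-2*x + x^3/3) * I := by
  simp [Finset.sum_range_succ, Nat.factorial]
  linear_combination (-(x:ℂ)^3 * I / 3) * Complex.I_sq

private lemma pc4_sin_taylor5 (x : ℝ) (hx : |x| ≤ 1) :
    |Real.sin x - (x - x^3/6)| ≤ |x|^5 / 100 := by
  have habs : ‖(x:ℂ)*I‖ ≤ 1 := by simpa using hx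
  have habs' : ‖-(x:ℂ)*I‖ ≤ 1 := by simpa using hx
  have hA := Complex.exp_bound habs (n := 5) (by norm_num)
  have hB := Complex.exp_bound habs' (n := 5) (by norm_num)
  have hs : (Real.sin x : ℂ) = (Complex.exp (-(x:ℂ)*I) - Complex.exp ((x:ℂ)*I)) * I / 2 := by
    rw [Complex.ofReal_sin, Complex.sin]
  have key : ((Real.sin x : ℂ) - ((x:ℂ) - (x:ℂ)^3/6)) =
      ((Complex.exp (-(x:ℂ)*I) - ∑ m ∈ Finset.range 5, (-(x:ℂ)*I)^m / m.factorial)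
        - (Complex.exp ((x:ℂ)*I) - ∑ m ∈ Finset.range 5, ((x:ℂ)*I)^m / m.factorial)) * I / 2 := by
    linear_combination hs + (Complex.I/2) * pc4_sum_id x
      + ((-2*(x:ℂ) + x^3/3)/2) * Complex.I_sq
  have h0 : |Real.sin x - (x - x^3/6)|
      = ‖((Real.sin x : ℂ) - ((x:ℂ) - (x:ℂ)^3/6))‖ := by
    rw [← Real.norm_eq_abs, ← Complex.norm_real]; norm_cast
  rw [h0, key, norm_div, norm_mul]
  simp only [Complex.norm_I, mul_one, Complex.norm_two]
  have htri : ‖((Complex.exp (-(x:ℂ)*I)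
          - ∑ m ∈ Finset.range 5, (-(x:ℂ)*I)^m / m.factorial)
        - (Complex.exp ((x:ℂ)*I) - ∑ m ∈ Finset.range 5, ((x:ℂ)*I)^m / m.factorial))‖
      ≤ ‖(Complex.exp (-(x:ℂ)*I)
          - ∑ m ∈ Finset.range 5, (-(x:ℂ)*I)^m / m.factorial)‖
        + ‖(Complex.exp ((x:ℂ)*I)
          - ∑ m ∈ Finset.range 5, ((x:ℂ)*I)^m / m.factorial)‖ := by
    simpa using
      norm_sub_le (Complex.exp (-(x:ℂ)*I) - ∑ m ∈ Finset.range 5, (-(x:ℂ)*I)^m / m.factorial)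
        (Complex.exp ((x:ℂ)*I) - ∑ m ∈ Finset.range 5, ((x:ℂ)*I)^m / m.factorial)
  have hax : ‖(x:ℂ)*I‖ = |x| := by simp
  have hax' : ‖-(x:ℂ)*I‖ = |x| := by simp
  rw [hax] at hA; rw [hax'] at hB
  norm_num [Nat.factorial] at hA hB
  have h5 : (0:ℝ) ≤ |x|^5 := by positivity
  simp only [neg_mul] at htri ⊢
  linarith [htri]

/-- The averaged numerical wavenumber of the prefactored PC4 scheme
(`β = 1/2 − 1/(2√3)`, `b₁ = 1`) agrees with the exact wavenumber `z` up to `O(z^5)`: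
the prefactored scheme preserves the fourth order of accuracy. -/
theorem pc4_averaged_wavenumber_order
    (β : ℝ) (hβ : β = 1/2 - 1/(2 * Real.sqrt 3))
    (Kbar : ℝ → ℝ)
    (hK : ∀ z : ℝ, Kbar z =
      ((Complex.exp (Complex.I * (z : ℂ)) - 1) *
          (starRingEnd ℂ) (((1 - β : ℝ) : ℂ) + (β : ℂ) * Complex.exp (Complex.I * (z : ℂ)))).im /
        ‖((1 - β : ℝ) : ℂ) + (β : ℂ) * Complex.exp (Complex.I * (z : ℂ))‖ ^ 2) :
    (fun z : ℝ => Kbar z - z) =O[𝓝 (0 : ℝ)] fun z : ℝ => z ^ 5 := by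
  have hc : β * (1 - β) = 1/6 := by
    have hs : Real.sqrt 3 ^ 2 = 3 := Real.sq_sqrt (by norm_num)
    have hs0 : Real.sqrt 3 ≠ 0 := by positivity
    rw [hβ]; field_simp; nlinarith [hs]
  have hnum : ∀ z : ℝ, ((Complex.exp (Complex.I * (z : ℂ)) - 1) *
          (starRingEnd ℂ) (((1 - β : ℝ) : ℂ) + (β : ℂ) * Complex.exp (Complex.I * (z : ℂ)))).im
      = Real.sin z := by
    intro z
    rw [mul_comm Complex.I (z:ℂ), Complex.exp_mul_I]
    simp [Complex.mul_im, Complex.mul_re, Complex.sin_ofReal_re, Complex.cos_ofReal_re,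
      Complex.sin_ofReal_im, Complex.cos_ofReal_im]
    ring
  have hden : ∀ z : ℝ,
      ‖((1 - β : ℝ) : ℂ) + (β : ℂ) * Complex.exp (Complex.I * (z : ℂ))‖ ^ 2
        = (2 + Real.cos z) / 3 := by
    intro z
    rw [mul_comm Complex.I (z:ℂ), Complex.exp_mul_I, Complex.sq_norm, Complex.normSq_apply]
    simp [Complex.mul_im, Complex.mul_re, Complex.sin_ofReal_re, Complex.cos_ofReal_re,
      Complex.sin_ofReal_im, Complex.cos_ofReal_im]
    linear_combination (β^2) * Real.sin_sq_add_cos_sq z + (2*Real.cos z - 2) * hc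
  have hKz : ∀ z : ℝ, Kbar z = Real.sin z / ((2 + Real.cos z) / 3) := by
    intro z; rw [hK z, hnum z, hden z]
  rw [isBigO_iff]
  refine ⟨1, ?_⟩
  have hev : ∀ᶠ z : ℝ in 𝓝 0, |z| ≤ 1 := by
    filter_upwards [Metric.closedBall_mem_nhds (0:ℝ) one_pos] with z hz
    simpa [Real.dist_eq] using hz
  filter_upwards [hev] with z hz
  have hcos1 : (1:ℝ) ≤ 2 + Real.cos z := by nlinarith [Real.neg_one_le_cos z]
  have hcos0 : (2 + Real.cos z) ≠ 0 := by linarith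
  have heq : Kbar z - z = (3*Real.sin z - 2*z - z*Real.cos z) / (2 + Real.cos z) := by
    rw [hKz z]; field_simp; ring
  have hsin := pc4_sin_taylor5 z hz
  have hcosb := Real.cos_bound hz
  have hnb : |3*Real.sin z - 2*z - z*Real.cos z| ≤ |z|^5 := by
    have h1 : 3*Real.sin z - 2*z - z*Real.cos z
        = 3*(Real.sin z - (z - z^3/6)) - z*(Real.cos z - (1 - z^2/2)) := by ring
    rw [h1]
    have h2 : |3*(Real.sin z - (z - z^3/6)) - z*(Real.cos z - (1 - z^2/2))|
        ≤ |3*(Real.sin z - (z - z^3/6))| + |z*(Real.cos z - (1 - z^2/2))| := abs_sub _ _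
    rw [abs_mul, abs_mul] at h2
    have h3 : |z| * |Real.cos z - (1 - z^2/2)| ≤ |z| * (|z|^4 * (5/96)) :=
      mul_le_mul_of_nonneg_left hcosb (abs_nonneg z)
    have h4 : (|(3:ℝ)|) = 3 := by norm_num
    rw [h4] at h2
    nlinarith [abs_nonneg z, pow_nonneg (abs_nonneg z) 5, hsin, h2, h3]
  rw [Real.norm_eq_abs, Real.norm_eq_abs, heq, abs_div, abs_of_pos (show (0:ℝ) < 2 + Real.cos z by linarith), one_mul, _root_.abs_pow]
  calc |3*Real.sin z - 2*z - z*Real.cos z| / (2 + Real.cos z)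
      ≤ |3*Real.sin z - 2*z - z*Real.cos z| := div_le_self (abs_nonneg _) hcos1
    _ ≤ |z|^5 := hnb
end

section
/- Let β = 1/2 − 1/(2√5), b₂ = 1/(30(1 − β)), b₁ = 14/15 − 2β·b₂, and define the averaged numerical wavenumber of the prefactored PC6 scheme by K̄(z) = Im[(b₁(e^{iz} − 1) + b₂(e^{2iz} − 1))·conj((1 − β) + β·e^{iz})] / |(1 − β) + β·e^{iz}|². Then K̄(z) − z = O(z⁷) as z → 0; that is, the prefactored PC6 scheme preserves the sixth order of accuracy of the original compact scheme. -/
open Complex Filter Asymptotics Topology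

namespace PC6Aux

open Finset

lemma partial7_im (x : ℝ) : (∑ m ∈ range 7, ((x:ℂ) * I) ^ m / m.factorial).im
    = x - x^3/6 + x^5/120 := by
  simp [Finset.sum_range_succ, Nat.factorial, pow_succ, Complex.div_im, Complex.normSq]
  ring

lemma partial7_re (x : ℝ) : (∑ m ∈ range 7, ((x:ℂ) * I) ^ m / m.factorial).re
    = 1 - x^2/2 + x^4/24 - x^6/720 := by
  simp [Finset.sum_range_succ, Nat.factorial, pow_succ, Complex.div_re, Complex.normSq]
  ring

lemma exp7 (x : ℝ) (hx : |x| ≤ 1) :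
    ‖Complex.exp ((x:ℂ) * I) - ∑ m ∈ range 7, ((x:ℂ) * I) ^ m / m.factorial‖
      ≤ |x| ^ 7 := by
  have h := Complex.exp_bound (x := (x:ℂ) * I) (by simpa using hx) (n := 7) (by norm_num)
  have habs : ‖(x:ℂ) * I‖ = |x| := by simp
  rw [habs] at h
  refine h.trans ?_
  have : |x| ^ 7 * (Nat.succ 7 * ((Nat.factorial 7) * (7:ℕ) : ℝ)⁻¹) ≤ |x|^7 * 1 := by
    gcongr
    norm_num [Nat.factorial]
  simpa using this

lemma sin7 (x : ℝ) (hx : |x| ≤ 1) : |Real.sin x - (x - x^3/6 + x^5/120)| ≤ |x|^7 := by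
  have h := exp7 x hx
  have := Complex.abs_im_le_norm
    (Complex.exp ((x:ℂ) * I) - ∑ m ∈ range 7, ((x:ℂ) * I) ^ m / m.factorial)
  rw [Complex.sub_im, Complex.exp_ofReal_mul_I_im, partial7_im] at this
  linarith

lemma cos7 (x : ℝ) (hx : |x| ≤ 1) : |Real.cos x - (1 - x^2/2 + x^4/24 - x^6/720)| ≤ |x|^7 := by
  have h := exp7 x hx
  have := Complex.abs_re_le_norm
    (Complex.exp ((x:ℂ) * I) - ∑ m ∈ range 7, ((x:ℂ) * I) ^ m / m.factorial)
  rw [Complex.sub_re, Complex.exp_ofReal_mul_I_re, partial7_re] at this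
  linarith

lemma Kform (β b₁ b₂ : ℝ)
    (hβ : β = 1/2 - 1/(2 * Real.sqrt 5))
    (hb₂ : b₂ = 1/(30 * (1 - β)))
    (hb₁ : b₁ = 14/15 - 2 * β * b₂) (z : ℝ) :
    (((b₁ : ℂ) * (Complex.exp (Complex.I * (z : ℂ)) - 1)
          + (b₂ : ℂ) * (Complex.exp (2 * Complex.I * (z : ℂ)) - 1)) *
          (starRingEnd ℂ) (((1 - β : ℝ) : ℂ) + (β : ℂ) * Complex.exp (Complex.I * (z : ℂ)))).im /
        ‖((1 - β : ℝ) : ℂ) + (β : ℂ) * Complex.exp (Complex.I * (z : ℂ))‖ ^ 2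
      = (14/15 * Real.sin z + 1/30 * Real.sin (2*z)) / (3/5 + 2/5 * Real.cos z) := by
  have hs0 : (0:ℝ) < Real.sqrt 5 := Real.sqrt_pos.2 (by norm_num)
  have hs : Real.sqrt 5 ^ 2 = 5 := Real.sq_sqrt (by norm_num)
  have hc : β * (1 - β) = 1/5 := by
    rw [hβ]; field_simp; nlinarith [hs]
  have hβlt : 1 - β > 0 := by
    rw [hβ]; have : 1/(2*Real.sqrt 5) > 0 := by positivity
    linarith
  have hB : b₂ * (1 - β) = 1/30 := by
    rw [hb₂]; field_simp
  have hA : b₁ + 2 * β * b₂ = 14/15 := by rw [hb₁]; ring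
  have he1 : Complex.I * (z:ℂ) = (z:ℂ) * Complex.I := by ring
  have he2 : 2 * Complex.I * (z:ℂ) = ((2*z:ℝ):ℂ) * Complex.I := by push_cast; ring
  rw [he1, he2, Complex.sq_norm]
  simp only [Complex.normSq_apply, Complex.mul_im, Complex.mul_re, Complex.add_re,
    Complex.add_im, Complex.sub_re, Complex.sub_im, Complex.one_re, Complex.one_im,
    Complex.exp_ofReal_mul_I_re, Complex.exp_ofReal_mul_I_im, Complex.ofReal_re,
    Complex.ofReal_im, RingHom.coe_coe, Complex.conj_re, Complex.conj_im]
  have hpy := Real.sin_sq_add_cos_sq z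
  have hsin : Real.sin (2*z) = 2 * Real.sin z * Real.cos z := Real.sin_two_mul z
  have hcos : Real.cos (2*z) = 2 * Real.cos z ^ 2 - 1 := Real.cos_two_mul z
  congr 1
  · linear_combination (Real.sin z) * hA + (Real.sin (2*z)) * hB
      + b₂ * β * (Real.cos z * hsin - Real.sin z * hcos)
  · linear_combination β^2 * hpy + (2*Real.cos z - 2) * hc

end PC6Aux

/-- The averaged numerical wavenumber of the prefactored PC6 scheme
(`β = 1/2 − 1/(2√5)`, `b₂ = 1/(30(1−β))`, `b₁ = 14/15 − 2β·b₂`) agrees with the exact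
wavenumber `z` up to `O(z^7)`: the prefactored scheme preserves the sixth order of
accuracy. -/
theorem pc6_averaged_wavenumber_order
    (β b₁ b₂ : ℝ)
    (hβ : β = 1/2 - 1/(2 * Real.sqrt 5))
    (hb₂ : b₂ = 1/(30 * (1 - β)))
    (hb₁ : b₁ = 14/15 - 2 * β * b₂)
    (Kbar : ℝ → ℝ)
    (hK : ∀ z : ℝ, Kbar z =
      (((b₁ : ℂ) * (Complex.exp (Complex.I * (z : ℂ)) - 1)
          + (b₂ : ℂ) * (Complex.exp (2 * Complex.I * (z : ℂ)) - 1)) *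
          (starRingEnd ℂ) (((1 - β : ℝ) : ℂ) + (β : ℂ) * Complex.exp (Complex.I * (z : ℂ)))).im /
        ‖((1 - β : ℝ) : ℂ) + (β : ℂ) * Complex.exp (Complex.I * (z : ℂ))‖ ^ 2) :
    (fun z : ℝ => Kbar z - z) =O[𝓝 (0 : ℝ)] fun z : ℝ => z ^ 7 := by
  have hKf : ∀ z : ℝ, Kbar z
      = (14/15 * Real.sin z + 1/30 * Real.sin (2*z)) / (3/5 + 2/5 * Real.cos z) := by
    intro z
    rw [hK z, PC6Aux.Kform β b₁ b₂ hβ hb₂ hb₁ z]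
  rw [Asymptotics.isBigO_iff]
  refine ⟨40, ?_⟩
  filter_upwards [Metric.ball_mem_nhds (0:ℝ) one_half_pos] with z hz
  rw [Metric.mem_ball, Real.dist_eq, sub_zero] at hz
  have hz1 : |z| ≤ 1/2 := le_of_lt hz
  have h2z : |2*z| = 2 * |z| := by rw [abs_mul]; norm_num
  have hz2 : |2*z| ≤ 1 := by rw [h2z]; linarith
  have hz1' : |z| ≤ 1 := by linarith
  have hd1 : (1:ℝ)/5 ≤ 3/5 + 2/5 * Real.cos z := by
    have := Real.neg_one_le_cos z; linarith
  have hd0 : (0:ℝ) < 3/5 + 2/5 * Real.cos z := by linarith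
  have R1 := PC6Aux.sin7 z hz1'
  have R2 := PC6Aux.sin7 (2*z) hz2
  have R3 := PC6Aux.cos7 z hz1'
  have h2abs : |2*z|^7 = 128 * |z|^7 := by rw [h2z, mul_pow]; norm_num
  rw [h2abs] at R2
  set F : ℝ := 14/15 * Real.sin z + 1/30 * Real.sin (2*z)
      - z * (3/5 + 2/5 * Real.cos z) with hF
  have hFdecomp : F = 14/15 * (Real.sin z - (z - z^3/6 + z^5/120))
      + 1/30 * (Real.sin (2*z) - (2*z - (2*z)^3/6 + (2*z)^5/120))
      - 2/5 * (z * (Real.cos z - (1 - z^2/2 + z^4/24 - z^6/720)))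
      + z^7/1800 := by
    rw [hF]; ring
  have hz7 : |z^7| = |z|^7 := abs_pow z 7
  have h7 : (0:ℝ) ≤ |z|^7 := pow_nonneg (abs_nonneg z) 7
  have hFbound : |F| ≤ 6 * |z|^7 := by
    have hzr3 : |z * (Real.cos z - (1 - z^2/2 + z^4/24 - z^6/720))| ≤ 1/2 * |z|^7 := by
      rw [abs_mul]
      exact mul_le_mul hz1 R3 (abs_nonneg _) (by norm_num)
    obtain ⟨l1, u1⟩ := abs_le.mp R1
    obtain ⟨l2, u2⟩ := abs_le.mp R2
    obtain ⟨l4, u4⟩ := abs_le.mp hzr3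
    have u5 : z^7 ≤ |z|^7 := by rw [← hz7]; exact le_abs_self _
    have l5 : -|z|^7 ≤ z^7 := by rw [← hz7]; exact neg_abs_le _
    rw [hFdecomp, abs_le]
    constructor <;> linarith
  have hval : Kbar z - z = F / (3/5 + 2/5 * Real.cos z) := by
    rw [hKf z, eq_div_iff hd0.ne', sub_mul, div_mul_cancel₀ _ hd0.ne', hF]
  rw [hval, Real.norm_eq_abs, Real.norm_eq_abs, abs_div, abs_of_pos hd0, hz7,
    div_le_iff₀ hd0]
  nlinarith [mul_nonneg h7 (by linarith : (0:ℝ) ≤ 3/5 + 2/5 * Real.cos z - 1/5)]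
end
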